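/- arXiv:1705.07576 — 7 statements merged into one kernel-verified Lean document; each statement's English description precedes it below -/
import Mathlib

section
/- For all θ in (0, π], the function g(θ) = arccos(((π − θ)cos θ + sin θ)/π) satisfies 0 < g(θ) ≤ (1/(3π) + 1/θ)^{-1}. -/
open Real

noncomputable def g (θ : ℝ) : ℝ :=
  Real.arccos (((π - θ) * Real.cos θ + Real.sin θ) / π)

private lemma nonneg_of_hasDerivAt (f f' : ℝ → ℝ) (hf : ∀ x, HasDerivAt f (f' x) x)
    (h0 : f 0 = 0) (hd : ∀ x, 0 ≤ x → 0 ≤ f' x) {x : ℝ} (hx : 0 ≤ x) : 0 ≤ f x := by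
  have hmono : MonotoneOn f (Set.Ici 0) := by
    apply monotoneOn_of_deriv_nonneg (convex_Ici 0)
    · exact fun y _ => (hf y).continuousAt.continuousWithinAt
    · exact fun y _ => ((hf y).differentiableAt).differentiableWithinAt
    · intro y hy
      rw [interior_Ici] at hy
      rw [(hf y).deriv]
      exact hd y (le_of_lt hy)
  have := hmono (Set.self_mem_Ici) (Set.mem_Ici.2 hx) hx
  linarith [h0 ▸ this]

private lemma sin_lb1 {x : ℝ} (hx : 0 ≤ x) : x - x^3/6 ≤ Real.sin x := by
  have := nonneg_of_hasDerivAt (fun y => Real.sin y - (y - y^3/6))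
      (fun y => Real.cos y - (1 - y^2/2))
      (fun y => by
        have h := (Real.hasDerivAt_sin y).sub ((hasDerivAt_id y).sub ((hasDerivAt_pow 3 y).div_const 6))
        exact h.congr_deriv (by push_cast; ring))
      (by norm_num)
      (fun y _ => by have := Real.one_sub_sq_div_two_le_cos (x := y); linarith) hx
  linarith

private lemma cos_ub1 {x : ℝ} (hx : 0 ≤ x) : Real.cos x ≤ 1 - x^2/2 + x^4/24 := by
  have := nonneg_of_hasDerivAt (fun y => 1 - y^2/2 + y^4/24 - Real.cos y)
      (fun y => Real.sin y - (y - y^3/6))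
      (fun y => by
        have h := ((((hasDerivAt_const y (1:ℝ)).sub ((hasDerivAt_pow 2 y).div_const 2)).add
          ((hasDerivAt_pow 4 y).div_const 24)).sub (Real.hasDerivAt_cos y))
        exact h.congr_deriv (by push_cast; ring))
      (by norm_num)
      (fun y hy => by have := sin_lb1 hy; linarith) hx
  linarith

private lemma sin_ub1 {x : ℝ} (hx : 0 ≤ x) : Real.sin x ≤ x - x^3/6 + x^5/120 := by
  have := nonneg_of_hasDerivAt (fun y => y - y^3/6 + y^5/120 - Real.sin y)
      (fun y => 1 - y^2/2 + y^4/24 - Real.cos y)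
      (fun y => by
        have h := ((((hasDerivAt_id y).sub ((hasDerivAt_pow 3 y).div_const 6)).add
          ((hasDerivAt_pow 5 y).div_const 120)).sub (Real.hasDerivAt_sin y))
        exact h.congr_deriv (by push_cast; ring))
      (by norm_num)
      (fun y hy => by have := cos_ub1 hy; linarith) hx
  linarith

private lemma cos_lb2 {x : ℝ} (hx : 0 ≤ x) : 1 - x^2/2 + x^4/24 - x^6/720 ≤ Real.cos x := by
  have := nonneg_of_hasDerivAt (fun y => Real.cos y - (1 - y^2/2 + y^4/24 - y^6/720))
      (fun y => (y - y^3/6 + y^5/120) - Real.sin y)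
      (fun y => by
        have h := (Real.hasDerivAt_cos y).sub ((((hasDerivAt_const y (1:ℝ)).sub
          ((hasDerivAt_pow 2 y).div_const 2)).add ((hasDerivAt_pow 4 y).div_const 24)).sub
          ((hasDerivAt_pow 6 y).div_const 720))
        exact h.congr_deriv (by push_cast; ring))
      (by norm_num)
      (fun y hy => by have := sin_ub1 hy; linarith) hx
  linarith

private lemma sin_lb2 {x : ℝ} (hx : 0 ≤ x) : x - x^3/6 + x^5/120 - x^7/5040 ≤ Real.sin x := by
  have := nonneg_of_hasDerivAt (fun y => Real.sin y - (y - y^3/6 + y^5/120 - y^7/5040))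
      (fun y => Real.cos y - (1 - y^2/2 + y^4/24 - y^6/720))
      (fun y => by
        have h := (Real.hasDerivAt_sin y).sub (((((hasDerivAt_id y).sub
          ((hasDerivAt_pow 3 y).div_const 6)).add ((hasDerivAt_pow 5 y).div_const 120)).sub
          ((hasDerivAt_pow 7 y).div_const 5040)))
        exact h.congr_deriv (by push_cast; ring))
      (by norm_num)
      (fun y hy => by have := cos_lb2 hy; linarith) hx
  linarith

private lemma cos_ub2 {x : ℝ} (hx : 0 ≤ x) :
    Real.cos x ≤ 1 - x^2/2 + x^4/24 - x^6/720 + x^8/40320 := by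
  have := nonneg_of_hasDerivAt
      (fun y => 1 - y^2/2 + y^4/24 - y^6/720 + y^8/40320 - Real.cos y)
      (fun y => Real.sin y - (y - y^3/6 + y^5/120 - y^7/5040))
      (fun y => by
        have h := ((((((hasDerivAt_const y (1:ℝ)).sub ((hasDerivAt_pow 2 y).div_const 2)).add
          ((hasDerivAt_pow 4 y).div_const 24)).sub ((hasDerivAt_pow 6 y).div_const 720)).add
          ((hasDerivAt_pow 8 y).div_const 40320)).sub (Real.hasDerivAt_cos y))
        exact h.congr_deriv (by push_cast; ring))
      (by norm_num)
      (fun y hy => by have := sin_lb2 hy; linarith) hx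
  linarith

private lemma arccos_anti {x y : ℝ} (h : x ≤ y) : Real.arccos y ≤ Real.arccos x := by
  unfold Real.arccos
  exact sub_le_sub_left (Real.monotone_arcsin h) _

set_option maxHeartbeats 4000000 in
private lemma key_poly (p t : ℝ) (hp1 : 3.141592 < p) (hp2 : p < 3.141593)
    (ht0 : 0 ≤ t) (htp : t ≤ p) :
    p * ((3*p+t)^8 - (3*p*t)^2*(3*p+t)^6/2 + (3*p*t)^4*(3*p+t)^4/24 - (3*p*t)^6*(3*p+t)^2/720 + (3*p*t)^8/40320)
      ≤ ((p - t) * (1 - t^2/2 + t^4/24 - t^6/720) + (t - t^3/6 + t^5/120 - t^7/5040)) * (3*p+t)^8 := by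
  have hp0 : (0:ℝ) < p := by linarith
  have hpt : (0:ℝ) ≤ p - t := by linarith
  have hl2 : (9.8696:ℝ) < p^2 := by nlinarith [hp1, hp0]
  have hu2 : p^2 < (9.869607:ℝ) := by nlinarith [hp2, hp0]
  have hl3 : (31.006256:ℝ) < p^3 := by have h := mul_lt_mul'' hl2 hp1 (by norm_num) (by norm_num); rw [← pow_succ] at h; norm_num at h; linarith
  have hu3 : p^3 < (31.006289:ℝ) := by have h := mul_lt_mul'' hu2 hp2 (pow_nonneg hp0.le _) hp0.le; rw [← pow_succ] at h; norm_num at h; linarith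
  have hl4 : (97.409005:ℝ) < p^4 := by have h := mul_lt_mul'' hl3 hp1 (by norm_num) (by norm_num); rw [← pow_succ] at h; norm_num at h; linarith
  have hu4 : p^4 < (97.409141:ℝ) := by have h := mul_lt_mul'' hu3 hp2 (pow_nonneg hp0.le _) hp0.le; rw [← pow_succ] at h; norm_num at h; linarith
  have hl5 : (306.01935:ℝ) < p^5 := by have h := mul_lt_mul'' hl4 hp1 (by norm_num) (by norm_num); rw [← pow_succ] at h; norm_num at h; linarith
  have hu5 : p^5 < (306.019876:ℝ) := by have h := mul_lt_mul'' hu4 hp2 (pow_nonneg hp0.le _) hp0.le; rw [← pow_succ] at h; norm_num at h; linarith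
  have hl6 : (961.387941:ℝ) < p^6 := by have h := mul_lt_mul'' hl5 hp1 (by norm_num) (by norm_num); rw [← pow_succ] at h; norm_num at h; linarith
  have hu6 : p^6 < (961.389901:ℝ) := by have h := mul_lt_mul'' hu5 hp2 (pow_nonneg hp0.le _) hp0.le; rw [← pow_succ] at h; norm_num at h; linarith
  have hl7 : (3020.288664:ℝ) < p^7 := by have h := mul_lt_mul'' hl6 hp1 (by norm_num) (by norm_num); rw [← pow_succ] at h; norm_num at h; linarith
  have hu7 : p^7 < (3020.295784:ℝ) := by have h := mul_lt_mul'' hu6 hp2 (pow_nonneg hp0.le _) hp0.le; rw [← pow_succ] at h; norm_num at h; linarith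
  have hl8 : (9488.514704:ℝ) < p^8 := by have h := mul_lt_mul'' hl7 hp1 (by norm_num) (by norm_num); rw [← pow_succ] at h; norm_num at h; linarith
  have hu8 : p^8 < (9488.540093:ℝ) := by have h := mul_lt_mul'' hu7 hp2 (pow_nonneg hp0.le _) hp0.le; rw [← pow_succ] at h; norm_num at h; linarith
  have hl9 : (29809.041885:ℝ) < p^9 := by have h := mul_lt_mul'' hl8 hp1 (by norm_num) (by norm_num); rw [← pow_succ] at h; norm_num at h; linarith
  have hu9 : p^9 < (29809.131137:ℝ) := by have h := mul_lt_mul'' hu8 hp2 (pow_nonneg hp0.le _) hp0.le; rw [← pow_succ] at h; norm_num at h; linarith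
  have hl10 : (93647.847513:ℝ) < p^10 := by have h := mul_lt_mul'' hl9 hp1 (by norm_num) (by norm_num); rw [← pow_succ] at h; norm_num at h; linarith
  have hu10 : p^10 < (93648.157717:ℝ) := by have h := mul_lt_mul'' hu9 hp2 (pow_nonneg hp0.le _) hp0.le; rw [← pow_succ] at h; norm_num at h; linarith
  have hl11 : (294203.328564:ℝ) < p^11 := by have h := mul_lt_mul'' hl10 hp1 (by norm_num) (by norm_num); rw [← pow_succ] at h; norm_num at h; linarith
  have hu11 : p^11 < (294204.396747:ℝ) := by have h := mul_lt_mul'' hu10 hp2 (pow_nonneg hp0.le _) hp0.le; rw [← pow_succ] at h; norm_num at h; linarith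
  have hl12 : (924266.82339:ℝ) < p^12 := by have h := mul_lt_mul'' hl11 hp1 (by norm_num) (by norm_num); rw [← pow_succ] at h; norm_num at h; linarith
  have hu12 : p^12 < (924270.47339:ℝ) := by have h := mul_lt_mul'' hu11 hp2 (pow_nonneg hp0.le _) hp0.le; rw [← pow_succ] at h; norm_num at h; linarith
  have hl13 : (2903669.258227:ℝ) < p^13 := by have h := mul_lt_mul'' hl12 hp1 (by norm_num) (by norm_num); rw [← pow_succ] at h; norm_num at h; linarith
  have hu13 : p^13 < (2903681.649309:ℝ) := by have h := mul_lt_mul'' hu12 hp2 (pow_nonneg hp0.le _) hp0.le; rw [← pow_succ] at h; norm_num at h; linarith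
  have hl14 : (9122144.112291:ℝ) < p^14 := by have h := mul_lt_mul'' hl13 hp1 (by norm_num) (by norm_num); rw [← pow_succ] at h; norm_num at h; linarith
  have hu14 : p^14 < (9122185.943698:ℝ) := by have h := mul_lt_mul'' hu13 hp2 (pow_nonneg hp0.le _) hp0.le; rw [← pow_succ] at h; norm_num at h; linarith
  have hl15 : (28658054.96602:ℝ) < p^15 := by have h := mul_lt_mul'' hl14 hp1 (by norm_num) (by norm_num); rw [← pow_succ] at h; norm_num at h; linarith
  have hu15 : p^15 < (28658195.505421:ℝ) := by have h := mul_lt_mul'' hu14 hp2 (pow_nonneg hp0.le _) hp0.le; rw [← pow_succ] at h; norm_num at h; linarith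
  have hl16 : (90031916.216808:ℝ) < p^16 := by have h := mul_lt_mul'' hl15 hp1 (by norm_num) (by norm_num); rw [← pow_succ] at h; norm_num at h; linarith
  have hu16 : p^16 < (90032386.392463:ℝ) := by have h := mul_lt_mul'' hu15 hp2 (pow_nonneg hp0.le _) hp0.le; rw [← pow_succ] at h; norm_num at h; linarith
  have hl17 : (282843547.731394:ℝ) < p^17 := by have h := mul_lt_mul'' hl16 hp1 (by norm_num) (by norm_num); rw [← pow_succ] at h; norm_num at h; linarith
  have hu17 : p^17 < (282845114.863858:ℝ) := by have h := mul_lt_mul'' hu16 hp2 (pow_nonneg hp0.le _) hp0.le; rw [← pow_succ] at h; norm_num at h; linarith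
  have hf4 : (0:ℝ) ≤ (2187/2)*p^11 := by linarith only [hl11]
  have hf5 : (0:ℝ) ≤ (729/5)*p^13 + (28917/2)*p^11 := by linarith only [hl11, hl13]
  have hf6 : (0:ℝ) ≤ (30861/20)*p^13 + 86751*p^11 := by linarith only [hl11, hl13]
  have hf7 : (0:ℝ) ≤ -(729/70)*p^15 + (143451/20)*p^13 + 311769*p^11 := by linarith only [hl11, hl13, hu15]
  have hf8 : (0:ℝ) ≤ -(729/4480)*p^17 - (50301/560)*p^15 + (152847/8)*p^13 + (1491327/2)*p^11 := by linarith only [hl11, hl13, hu15, hu17]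
  have hf9 : (0:ℝ) ≤ -(729/640)*p^17 - (26541/80)*p^15 + (1271277/40)*p^13 + (2492361/2)*p^11 := by linarith only [hl11, hl13, hu15, hu17]
  have hf10 : (0:ℝ) ≤ -(2187/640)*p^17 - (54333/80)*p^15 + (267267/8)*p^13 + 1484940*p^11 := by linarith only [hl11, hl13, hu15, hu17]
  have hf11 : (0:ℝ) ≤ -(729/128)*p^17 - (66363/80)*p^15 + (829561/40)*p^13 + (3784744/3)*p^11 := by linarith only [hl11, hl13, hu15, hu17]
  have hf12 : (0:ℝ) ≤ -(729/128)*p^17 - (47977/80)*p^15 + (80206/15)*p^13 + (2246656/3)*p^11 := by linarith only [hl11, hl13, hu15, hu17]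
  have hf13 : (0:ℝ) ≤ -(2187/640)*p^17 - (11113/48)*p^15 - (4972/3)*p^13 + 295808*p^11 := by linarith only [hl11, hu13, hu15, hu17]
  have hf14 : (0:ℝ) ≤ -(729/640)*p^17 - (3949/126)*p^15 - (23104/15)*p^13 + (209920/3)*p^11 := by linarith only [hl11, hu13, hu15, hu17]
  have hf15 : (0:ℝ) ≤ -(729/4480)*p^17 + (1007/315)*p^15 - (4768/15)*p^13 + (22528/3)*p^11 := by linarith only [hl11, hu13, hl15, hu17]
  have ht4 : (0:ℝ) ≤ ((2187/2)*p^11) * (t^4 * (p-t)^11) := mul_nonneg hf4 (mul_nonneg (pow_nonneg ht0 _) (pow_nonneg hpt _))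
  have ht5 : (0:ℝ) ≤ ((729/5)*p^13 + (28917/2)*p^11) * (t^5 * (p-t)^10) := mul_nonneg hf5 (mul_nonneg (pow_nonneg ht0 _) (pow_nonneg hpt _))
  have ht6 : (0:ℝ) ≤ ((30861/20)*p^13 + 86751*p^11) * (t^6 * (p-t)^9) := mul_nonneg hf6 (mul_nonneg (pow_nonneg ht0 _) (pow_nonneg hpt _))
  have ht7 : (0:ℝ) ≤ (-(729/70)*p^15 + (143451/20)*p^13 + 311769*p^11) * (t^7 * (p-t)^8) := mul_nonneg hf7 (mul_nonneg (pow_nonneg ht0 _) (pow_nonneg hpt _))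
  have ht8 : (0:ℝ) ≤ (-(729/4480)*p^17 - (50301/560)*p^15 + (152847/8)*p^13 + (1491327/2)*p^11) * (t^8 * (p-t)^7) := mul_nonneg hf8 (mul_nonneg (pow_nonneg ht0 _) (pow_nonneg hpt _))
  have ht9 : (0:ℝ) ≤ (-(729/640)*p^17 - (26541/80)*p^15 + (1271277/40)*p^13 + (2492361/2)*p^11) * (t^9 * (p-t)^6) := mul_nonneg hf9 (mul_nonneg (pow_nonneg ht0 _) (pow_nonneg hpt _))
  have ht10 : (0:ℝ) ≤ (-(2187/640)*p^17 - (54333/80)*p^15 + (267267/8)*p^13 + 1484940*p^11) * (t^10 * (p-t)^5) := mul_nonneg hf10 (mul_nonneg (pow_nonneg ht0 _) (pow_nonneg hpt _))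
  have ht11 : (0:ℝ) ≤ (-(729/128)*p^17 - (66363/80)*p^15 + (829561/40)*p^13 + (3784744/3)*p^11) * (t^11 * (p-t)^4) := mul_nonneg hf11 (mul_nonneg (pow_nonneg ht0 _) (pow_nonneg hpt _))
  have ht12 : (0:ℝ) ≤ (-(729/128)*p^17 - (47977/80)*p^15 + (80206/15)*p^13 + (2246656/3)*p^11) * (t^12 * (p-t)^3) := mul_nonneg hf12 (mul_nonneg (pow_nonneg ht0 _) (pow_nonneg hpt _))
  have ht13 : (0:ℝ) ≤ (-(2187/640)*p^17 - (11113/48)*p^15 - (4972/3)*p^13 + 295808*p^11) * (t^13 * (p-t)^2) := mul_nonneg hf13 (mul_nonneg (pow_nonneg ht0 _) (pow_nonneg hpt _))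
  have ht14 : (0:ℝ) ≤ (-(729/640)*p^17 - (3949/126)*p^15 - (23104/15)*p^13 + (209920/3)*p^11) * (t^14 * (p-t)^1) := mul_nonneg hf14 (mul_nonneg (pow_nonneg ht0 _) (pow_nonneg hpt _))
  have ht15 : (0:ℝ) ≤ (-(729/4480)*p^17 + (1007/315)*p^15 - (4768/15)*p^13 + (22528/3)*p^11) * (t^15 * (p-t)^0) := mul_nonneg hf15 (mul_nonneg (pow_nonneg ht0 _) (pow_nonneg hpt _))
  have hid : p^15 * (((p - t) * (1 - t^2/2 + t^4/24 - t^6/720) + (t - t^3/6 + t^5/120 - t^7/5040)) * (3*p+t)^8 - p * ((3*p+t)^8 - (3*p*t)^2*(3*p+t)^6/2 + (3*p*t)^4*(3*p+t)^4/24 - (3*p*t)^6*(3*p+t)^2/720 + (3*p*t)^8/40320)) = ((2187/2)*p^11) * (t^4 * (p-t)^11) + ((729/5)*p^13 + (28917/2)*p^11) * (t^5 * (p-t)^10) + ((30861/20)*p^13 + 86751*p^11) * (t^6 * (p-t)^9) + (-(729/70)*p^15 + (143451/20)*p^13 + 311769*p^11) * (t^7 * (p-t)^8) + (-(729/4480)*p^17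 - (50301/560)*p^15 + (152847/8)*p^13 + (1491327/2)*p^11) * (t^8 * (p-t)^7) + (-(729/640)*p^17 - (26541/80)*p^15 + (1271277/40)*p^13 + (2492361/2)*p^11) * (t^9 * (p-t)^6) + (-(2187/640)*p^17 - (54333/80)*p^15 + (267267/8)*p^13 + 1484940*p^11) * (t^10 * (p-t)^5) + (-(729/128)*p^17 - (66363/80)*p^15 + (829561/40)*p^13 + (3784744/3)*p^11) * (t^11 * (p-t)^4) + (-(729/128)*p^17 - (47977/80)*p^15 + (80206/15)*p^13 + (2246656/3)*p^11) * (t^12 * (p-t)^3) + (-(2187/640)*p^17 - (11113/48)*p^15 - (4972/3)*p^13 + 295808*p^11) * (t^13 * (p-t)^2) + (-(729/640)*p^17 - (3949/126)*p^15 - (23104/15)*p^13 + (209920/3)*p^11) * (t^14 * (p-t)^1) + (-(729/4480)*p^17 + (1007/315)*p^15 - (4768/15)*p^13 + (22528/3)*p^11) * (t^15 * (p-t)^0) := by ring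
  have hSum : (0:ℝ) ≤ ((2187/2)*p^11) * (t^4 * (p-t)^11) + ((729/5)*p^13 + (28917/2)*p^11) * (t^5 * (p-t)^10) + ((30861/20)*p^13 + 86751*p^11) * (t^6 * (p-t)^9) + (-(729/70)*p^15 + (143451/20)*p^13 + 311769*p^11) * (t^7 * (p-t)^8) + (-(729/4480)*p^17 - (50301/560)*p^15 + (152847/8)*p^13 + (1491327/2)*p^11) * (t^8 * (p-t)^7) + (-(729/640)*p^17 - (26541/80)*p^15 + (1271277/40)*p^13 + (2492361/2)*p^11) * (t^9 * (p-t)^6) + (-(2187/640)*p^17 - (54333/80)*p^15 + (267267/8)*p^13 + 1484940*p^11) * (t^10 * (p-t)^5) + (-(729/128)*p^17 - (66363/80)*p^15 + (829561/40)*p^13 + (3784744/3)*p^11) * (t^11 * (p-t)^4) + (-(729/128)*p^17 - (47977/80)*p^15 + (80206/15)*p^13 + (2246656/3)*p^11) * (t^12 * (p-t)^3) + (-(2187/640)*p^17 - (11113/48)*p^15 - (4972/3)*p^13 + 295808*p^11) * (t^13 * (p-t)^2) + (-(729/640)*p^17 - (3949/126)*p^15 - (23104/15)*p^13 + (209920/3)*p^11)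 * (t^14 * (p-t)^1) + (-(729/4480)*p^17 + (1007/315)*p^15 - (4768/15)*p^13 + (22528/3)*p^11) * (t^15 * (p-t)^0) := (add_nonneg (add_nonneg (add_nonneg (add_nonneg (add_nonneg (add_nonneg (add_nonneg (add_nonneg (add_nonneg (add_nonneg (add_nonneg ht4 ht5) ht6) ht7) ht8) ht9) ht10) ht11) ht12) ht13) ht14) ht15)
  have hS : (0:ℝ) ≤ p^15 * (((p - t) * (1 - t^2/2 + t^4/24 - t^6/720) + (t - t^3/6 + t^5/120 - t^7/5040)) * (3*p+t)^8 - p * ((3*p+t)^8 - (3*p*t)^2*(3*p+t)^6/2 + (3*p*t)^4*(3*p+t)^4/24 - (3*p*t)^6*(3*p+t)^2/720 + (3*p*t)^8/40320)) := by rw [hid]; exact hSum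
  have hfin := (mul_nonneg_iff_of_pos_left (pow_pos hp0 15)).mp hS
  linarith only [hfin]

set_option maxHeartbeats 2000000 in
theorem g_pos_and_upper_bound (θ : ℝ) (h1 : 0 < θ) (h2 : θ ≤ π) :
    0 < g θ ∧ g θ ≤ (1 / (3 * π) + 1 / θ)⁻¹ := by
  have hπ := Real.pi_pos
  have hs : (0:ℝ) < 3 * π + θ := by linarith
  constructor
  · rw [g, Real.arccos_pos, div_lt_one hπ]
    have h3 := Real.sin_lt h1
    have h4 : (π - θ) * Real.cos θ ≤ π - θ :=
      mul_le_of_le_one_right (by linarith) (Real.cos_le_one θ)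
    linarith
  · -- set b
    have hbeq : (1 / (3 * π) + 1 / θ)⁻¹ = 3 * π * θ / (3 * π + θ) := by
      rw [show 1 / (3 * π) + 1 / θ = (3 * π + θ) / (3 * π * θ) by
        field_simp; ring]
      rw [inv_div]
    set b : ℝ := 3 * π * θ / (3 * π + θ) with hbdef
    have hb0 : 0 ≤ b := by positivity
    have hbθ : b ≤ θ := by
      rw [hbdef, div_le_iff₀ hs]
      nlinarith
    have hbπ : b ≤ π := le_trans hbθ h2
    -- core inequality : π * cos b ≤ (π - θ) * cos θ + sin θ
    have hcore : π * Real.cos b ≤ (π - θ) * Real.cos θ + Real.sin θ := by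
      have hU := cos_ub2 hb0
      have hL := cos_lb2 h1.le
      have hSin := sin_lb2 h1.le
      have hbpoly : (1 - b^2/2 + b^4/24 - b^6/720 + b^8/40320) * (3*π+θ)^8
          = (3*π+θ)^8 - (3*π*θ)^2*(3*π+θ)^6/2 + (3*π*θ)^4*(3*π+θ)^4/24
            - (3*π*θ)^6*(3*π+θ)^2/720 + (3*π*θ)^8/40320 := by
        rw [hbdef]
        field_simp
      have hkey := key_poly π θ Real.pi_gt_d6 Real.pi_lt_d6 h1.le h2
      have h8 : (0:ℝ) ≤ (3*π+θ)^8 := by positivity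
      have hpt : 0 ≤ π - θ := by linarith
      have e1 : π * Real.cos b * (3*π+θ)^8 ≤ π * (1 - b^2/2 + b^4/24 - b^6/720 + b^8/40320) * (3*π+θ)^8 :=
        mul_le_mul_of_nonneg_right (mul_le_mul_of_nonneg_left hU hπ.le) h8
      have e2 : π * (1 - b^2/2 + b^4/24 - b^6/720 + b^8/40320) * (3*π+θ)^8
          = π * ((3*π+θ)^8 - (3*π*θ)^2*(3*π+θ)^6/2 + (3*π*θ)^4*(3*π+θ)^4/24
            - (3*π*θ)^6*(3*π+θ)^2/720 + (3*π*θ)^8/40320) := by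
        rw [mul_assoc, hbpoly]
      have e3 : ((π - θ) * (1 - θ^2/2 + θ^4/24 - θ^6/720) + (θ - θ^3/6 + θ^5/120 - θ^7/5040)) * (3*π+θ)^8
          ≤ ((π - θ) * Real.cos θ + Real.sin θ) * (3*π+θ)^8 := by
        have h5 : (π - θ) * (1 - θ^2/2 + θ^4/24 - θ^6/720) ≤ (π - θ) * Real.cos θ :=
          mul_le_mul_of_nonneg_left hL hpt
        exact mul_le_mul_of_nonneg_right (by linarith only [h5, hSin]) h8
      have hstep : π * Real.cos b * (3*π+θ)^8 ≤ ((π - θ) * Real.cos θ + Real.sin θ) * (3*π+θ)^8 :=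
        le_trans e1 (le_trans (le_of_eq e2) (le_trans hkey e3))
      exact le_of_mul_le_mul_right hstep (by positivity)
    have hx : Real.cos b ≤ ((π - θ) * Real.cos θ + Real.sin θ) / π := by
      rw [le_div_iff₀ hπ]
      linarith [hcore]
    rw [g, hbeq]
    calc Real.arccos (((π - θ) * Real.cos θ + Real.sin θ) / π)
        ≤ Real.arccos (Real.cos b) := arccos_anti hx
      _ = b := Real.arccos_cos hb0 hbπ
end

section
/- For all θ in (0, π], g(θ) ≥ (1/π + 1/θ)^{-1}, where g(θ) = arccos(((π − θ)cos θ + sin θ)/π). -/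
open Real

lemma my_sin_ub {x : ℝ} (h0 : 0 ≤ x) (h1 : x ≤ 1) :
    sin x ≤ x - x^3/6 + x^4*(5/96) := by
  have h := Real.sin_bound (x := x) (by rwa [abs_of_nonneg h0])
  rw [abs_of_nonneg h0, abs_le] at h
  nlinarith [h.2, mul_le_mul_of_nonneg_left h1 (pow_nonneg h0 4)]

lemma my_sin_lb {x : ℝ} (h0 : 0 ≤ x) (h1 : x ≤ 1) :
    x - x^3/6 - x^4*(5/96) ≤ sin x := by
  have h := Real.sin_bound (x := x) (by rwa [abs_of_nonneg h0])
  rw [abs_of_nonneg h0, abs_le] at h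
  nlinarith [h.1, mul_le_mul_of_nonneg_left h1 (pow_nonneg h0 4)]

lemma my_cos_ub {x : ℝ} (h0 : 0 ≤ x) (h1 : x ≤ 1) :
    cos x ≤ 1 - x^2/2 + x^4*(5/96) := by
  have h := Real.cos_bound (x := x) (by rwa [abs_of_nonneg h0])
  rw [abs_of_nonneg h0, abs_le] at h
  linarith [h.2]

lemma poly_q2_uni (s : ℝ) (h0 : 0 ≤ s) (h1 : s ≤ 1) :
    0 ≤ (476/375) + (-1099281/500000)*s + (1958407/4800000)*s^2 + (2894773/4500000)*s^3 + (55199/3600000)*s^4 + (-1332301/23040000)*s^5 + (-25/2304)*s^6 := by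
  nlinarith [sq_nonneg (s-1), sq_nonneg s, mul_nonneg h0 (sub_nonneg.2 h1), sq_nonneg (s*(1-s)), sq_nonneg (s-1/2), mul_nonneg (mul_nonneg h0 h0) (sub_nonneg.2 h1), mul_nonneg (mul_nonneg (mul_nonneg h0 h0) h0) (sub_nonneg.2 h1), sq_nonneg (s^2-s), sq_nonneg (s^2*(1-s)), mul_nonneg (mul_nonneg h0 h0) h0]

lemma poly_hB_uni (v : ℝ) (h0 : 0 ≤ v) (h1 : v ≤ 0.58) :
    0 ≤ (392699/125000) + (-3141593/375000)*v^2 + (22458407/9600000)*v^3 + (-11946903/16000000)*v^4 + (1042699/2400000)*v^5 + (17699/7200000)*v^6 + (-6341593/184320000)*v^7 + (25/4608)*v^8 := by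
  nlinarith [sq_nonneg v, mul_nonneg h0 (sub_nonneg.2 h1), mul_nonneg (mul_nonneg h0 h0) (sub_nonneg.2 h1), sq_nonneg (v*(1-v)), mul_nonneg (mul_nonneg (mul_nonneg h0 h0) h0) (sub_nonneg.2 h1), mul_nonneg (mul_nonneg (mul_nonneg (mul_nonneg h0 h0) h0) h0) (sub_nonneg.2 h1)]

lemma poly_q2 (s p : ℝ) (h0 : 0 ≤ s) (h1 : s ≤ 1) (hp1 : 3.141592 ≤ p) (hp2 : p ≤ 3.141593) :
    0 ≤ (476/375) + (-5/48)*s + (-2/3)*s*p + (17/16)*s^2 + (-5/24)*s^2*p + (15/32)*s^3 + (1/18)*s^3*p + (-3/32)*s^4 + (5/144)*s^4*p + (-115/1536)*s^5 + (25/4608)*s^5*p + (-25/2304)*s^6 := by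
  have h := poly_q2_uni s h0 h1
  have e1 : 0 ≤ s*(3.141593 - p) := mul_nonneg h0 (by linarith)
  have e2 : 0 ≤ s^2*(3.141593 - p) := mul_nonneg (by positivity) (by linarith)
  have e3 : 0 ≤ s^3*(p - 3.141592) := mul_nonneg (by positivity) (by linarith)
  have e4 : 0 ≤ s^4*(p - 3.141592) := mul_nonneg (by positivity) (by linarith)
  have e5 : 0 ≤ s^5*(p - 3.141592) := mul_nonneg (by positivity) (by linarith)
  linarith [h, e1, e2, e3, e4, e5]

lemma poly_hB (v p : ℝ) (h0 : 0 ≤ v) (h1 : v ≤ 0.58) (hp1 : 3.141592 ≤ p) (hp2 : p ≤ 3.141593) :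
    0 ≤ p + (-8/3)*v^2*p + (8/3)*v^3 + (-5/48)*v^3*p + (5/48)*v^4 + (-13/48)*v^4*p + (13/48)*v^5 + (5/96)*v^5*p + (-5/96)*v^6 + (5/288)*v^6*p + (-5/288)*v^7 + (-25/4608)*v^7*p + (25/4608)*v^8 := by
  have h := poly_hB_uni v h0 h1
  have e0 : (0:ℝ) ≤ (p - 3.141592) := by linarith
  have e2 : 0 ≤ v^2*(3.141593 - p) := mul_nonneg (by positivity) (by linarith)
  have e3 : 0 ≤ v^3*(3.141593 - p) := mul_nonneg (by positivity) (by linarith)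
  have e4 : 0 ≤ v^4*(3.141593 - p) := mul_nonneg (by positivity) (by linarith)
  have e5 : 0 ≤ v^5*(p - 3.141592) := mul_nonneg (by positivity) (by linarith)
  have e6 : 0 ≤ v^6*(p - 3.141592) := mul_nonneg (by positivity) (by linarith)
  have e7 : 0 ≤ v^7*(3.141593 - p) := mul_nonneg (by positivity) (by linarith)
  linarith [h, e0, e2, e3, e4, e5, e6, e7]

lemma poly_q1 (t p : ℝ) (h0 : 0 ≤ t) (h1 : t ≤ 2) (hp1 : 3.141592 ≤ p) (hp2 : p ≤ 3.141593) :
    0 ≤ (127/125)*p^2 - (121/125)*t*p - (123/125)*t^2 := by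
  nlinarith [sq_nonneg (t-2), sq_nonneg t, mul_nonneg h0 (sub_nonneg.2 h1)]

set_option maxHeartbeats 1000000 in
theorem g_lower_bound (θ : ℝ) (h1 : 0 < θ) (h2 : θ ≤ π) :
    (1 / π + 1 / θ)⁻¹ ≤ g θ := by
  have hπ : (0:ℝ) < π := pi_pos
  have hp1 : 3.141592 ≤ π := by linarith [pi_gt_d6]
  have hp2 : π ≤ 3.141593 := by linarith [pi_lt_d6]
  have hθπ : 0 < π + θ := by linarith
  have hbeq : (1 / π + 1 / θ)⁻¹ = π * θ / (π + θ) := by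
    rw [show 1/π + 1/θ = (π + θ)/(π*θ) by field_simp; ring, inv_div]
  rw [hbeq]
  set b := π * θ / (π + θ) with hbdef
  have hb0 : 0 ≤ b := by positivity
  have hb2 : b ≤ π / 2 := by
    rw [div_le_iff₀ hθπ]; nlinarith
  have key : ((π - θ) * cos θ + sin θ) / π ≤ cos b := by
    rcases le_or_gt θ 2 with hA | hB
    · -- case θ ≤ 2
      set s := θ / 2 with hsdef
      have hθs : θ = 2 * s := by rw [hsdef]; ring
      have hs0 : 0 ≤ s := by positivity
      have hs1 : s ≤ 1 := by rw [hsdef]; linarith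
      have hσub := my_sin_ub hs0 hs1
      have hσlb := my_sin_lb hs0 hs1
      have hτub := my_cos_ub hs0 hs1
      have hσ0 : 0 ≤ sin s := sin_nonneg_of_nonneg_of_le_pi hs0 (by linarith)
      have hτ0 : 0 ≤ cos s := cos_nonneg_of_mem_Icc ⟨by linarith, by linarith⟩
      have hplb0 : 0 ≤ s - s^3/6 - s^4*(5/96) := by nlinarith
      have hcosθ : cos θ = 1 - 2 * sin s ^ 2 := by
        have hpy := sin_sq_add_cos_sq s
        rw [hθs, Real.cos_two_mul]; linarith
      have hsinθ : sin θ = 2 * sin s * cos s := by rw [hθs, Real.sin_two_mul]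
      have hπ2s : 0 ≤ π - 2*s := by rw [← hθs]; linarith
      have hσsq : (s - s^3/6 - s^4*(5/96))^2 ≤ sin s ^ 2 :=
        pow_le_pow_left₀ hplb0 hσlb 2
      have hP1 : (π - 2*s) * ((s - s^3/6 - s^4*(5/96))^2) ≤ (π - 2*s) * sin s ^ 2 :=
        mul_le_mul_of_nonneg_left hσsq hπ2s
      have hστ : sin s * cos s ≤ (s - s^3/6 + s^4*(5/96)) * (1 - s^2/2 + s^4*(5/96)) :=
        mul_le_mul hσub hτub hτ0 (by nlinarith)
      have hq2 := poly_q2 s π hs0 hs1 hp1 hp2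
      have hq2s : 0 ≤ s^3 * ((476/375) + (-5/48)*s + (-2/3)*s*π + (17/16)*s^2 + (-5/24)*s^2*π + (15/32)*s^3 + (1/18)*s^3*π + (-3/32)*s^4 + (5/144)*s^4*π + (-115/1536)*s^5 + (25/4608)*s^5*π + (-25/2304)*s^6) :=
        mul_nonneg (by positivity) hq2
      have step1 : (π - θ) * cos θ + sin θ ≤ π - (π/2 - (123/250)*θ) * θ^2 := by
        rw [hcosθ, hsinθ, hθs]
        linarith [hP1, hστ, hq2s]
      have hq1 := poly_q1 θ π h1.le hA hp1 hp2
      have hq1t : 0 ≤ θ^3 * ((127/125)*π^2 - (121/125)*θ*π - (123/125)*θ^2) :=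
        mul_nonneg (by positivity) hq1
      have hbsq : b^2 * (π+θ)^2 = π^2 * θ^2 := by
        rw [hbdef]; field_simp
      have hbsq' : π * (b^2 * (π+θ)^2) = π * (π^2 * θ^2) := by rw [hbsq]
      have hRR : (π * b^2 / 2) * (π+θ)^2 ≤ ((π/2 - (123/250)*θ) * θ^2) * (π+θ)^2 := by
        nlinarith [hq1t, hbsq']
      have step2 : π * b^2 / 2 ≤ (π/2 - (123/250)*θ) * θ^2 :=
        le_of_mul_le_mul_right hRR (show (0:ℝ) < (π+θ)^2 by positivity)
      have hX : ((π - θ) * cos θ + sin θ) / π ≤ 1 - b^2/2 := by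
        rw [div_le_iff₀ hπ]
        linarith [step1, step2]
      linarith [one_sub_sq_div_two_le_cos (x := b)]
    · -- case 2 < θ ≤ π
      set u := π - θ with hudef
      have hu0 : 0 ≤ u := by rw [hudef]; linarith
      set v := u / 2 with hvdef
      have hv0 : 0 ≤ v := by positivity
      have hv1 : v ≤ 0.58 := by rw [hvdef, hudef]; linarith
      have hv1' : v ≤ 1 := by linarith
      have huv : u = 2 * v := by rw [hvdef]; ring
      have hθu : θ = π - u := by rw [hudef]; ring
      have hcosθ : cos θ = -cos u := by rw [hθu, Real.cos_pi_sub]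
      have hsinθ : sin θ = sin u := by rw [hθu, Real.sin_pi_sub]
      have hsinu : sin u = 2 * sin v * cos v := by rw [huv, Real.sin_two_mul]
      have hsv_ub := my_sin_ub hv0 hv1'
      have hcv_ub := my_cos_ub hv0 hv1'
      have hsv0 : 0 ≤ sin v := sin_nonneg_of_nonneg_of_le_pi hv0 (by linarith)
      have hcv0 : 0 ≤ cos v := cos_nonneg_of_mem_Icc ⟨by linarith, by linarith⟩
      have hστ : sin v * cos v ≤ (v - v^3/6 + v^4*(5/96)) * (1 - v^2/2 + v^4*(5/96)) :=
        mul_le_mul hsv_ub hcv_ub hcv0 (by nlinarith)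
      have hhB := poly_hB v π hv0 hv1 hp1 hp2
      have hvhB : 0 ≤ v * (π + (-8/3)*v^2*π + (8/3)*v^3 + (-5/48)*v^3*π + (5/48)*v^4 + (-13/48)*v^4*π + (13/48)*v^5 + (5/96)*v^5*π + (-5/96)*v^6 + (5/288)*v^6*π + (-5/288)*v^7 + (-25/4608)*v^7*π + (25/4608)*v^8) :=
        mul_nonneg hv0 hhB
      have h2πv : (0:ℝ) ≤ 2*π - 2*v := by linarith
      have hστ2 : (2*π - 2*v) * (2 * (sin v * cos v)) ≤ (2*π - 2*v) * (2 * ((v - v^3/6 + v^4*(5/96)) * (1 - v^2/2 + v^4*(5/96)))) := by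
        apply mul_le_mul_of_nonneg_left _ h2πv
        linarith
      have hucos2 : (2*v*(2*π - 2*v)) * (1 - (2*v)^2/2) ≤ (2*v*(2*π - 2*v)) * cos (2*v) :=
        mul_le_mul_of_nonneg_left (one_sub_sq_div_two_le_cos) (mul_nonneg (by linarith) h2πv)
      have main : (u * cos θ + sin θ) * (π + θ) ≤ π * u := by
        rw [hcosθ, hsinθ, hsinu, hθu, huv]
        linarith [hvhB, hστ2, hucos2]
      have hbid : b * (π + θ) = π * θ := by
        rw [hbdef]; field_simp
      have main2 : (u * cos θ + sin θ) * (π + θ) ≤ (π - 2*b) * (π + θ) := by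
        have hu2 : π * u = π * (π - θ) := by rw [hudef]
        linarith [main, hbid, hu2]
      have goal2 : u * cos θ + sin θ ≤ π - 2*b :=
        le_of_mul_le_mul_right main2 hθπ
      have hchord := one_sub_mul_le_cos hb0 hb2
      rw [div_le_iff₀ hπ]
      have hexp : (1 - 2/π*b) * π = π - 2*b := by field_simp
      have hchordπ : (1 - 2/π*b) * π ≤ cos b * π := mul_le_mul_of_nonneg_right hchord hπ.le
      linarith [goal2, hchordπ, hexp]
  have harc : arccos (cos b) = b := arccos_cos hb0 (by linarith)
  have hmono := Real.monotone_arcsin key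
  show b ≤ g θ
  rw [g, Real.arccos] at *
  linarith
end

section
/- Define θ̌_0 = π and θ̌_{i+1} = g(θ̌_i) where g(θ) = arccos(((π − θ)cos θ + sin θ)/π). Then for all i ≥ 0, θ̌_i ≤ 3π/(i + 3). -/
open Real

private lemma aux_nonneg' {f f' : ℝ → ℝ} (hder : ∀ x, HasDerivAt f (f' x) x)
    (h0 : f 0 = 0) (hf' : ∀ x, 0 ≤ x → 0 ≤ f' x) {x : ℝ} (hx : 0 ≤ x) : 0 ≤ f x := by
  have hmono : MonotoneOn f (Set.Ici 0) := by
    apply monotoneOn_of_deriv_nonneg (convex_Ici 0)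
    · exact fun y _ => (hder y).continuousAt.continuousWithinAt
    · exact fun y _ => ((hder y).differentiableAt).differentiableWithinAt
    · intro y hy
      rw [(hder y).deriv]
      exact hf' y (le_of_lt (by simpa using hy))
  calc (0:ℝ) = f 0 := h0.symm
    _ ≤ f x := hmono (Set.self_mem_Ici) hx hx

private lemma sin_ge3' {x : ℝ} (hx : 0 ≤ x) : x - x^3/6 ≤ sin x := by
  have h := aux_nonneg' (f := fun x => Real.sin x - (x - x^3/6))
      (f' := fun x => Real.cos x - (1 - x^2/2)) (fun y => by
        have h2 : HasDerivAt (fun x:ℝ => x - x^3/6) (1 - y^2/2) y := by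
          have h4 := (hasDerivAt_id y).sub ((hasDerivAt_pow 3 y).div_const 6)
          refine h4.congr_deriv ?_; push_cast; ring
        exact (Real.hasDerivAt_sin y).sub h2)
      (by norm_num)
      (fun y _ => by nlinarith [Real.one_sub_sq_div_two_le_cos (x := y)]) hx
  linarith [h]

private lemma cos_le4' {x : ℝ} (hx : 0 ≤ x) : cos x ≤ 1 - x^2/2 + x^4/24 := by
  have h := aux_nonneg' (f := fun x => (1 - x^2/2 + x^4/24) - Real.cos x)
      (f' := fun x => Real.sin x - (x - x^3/6)) (fun y => by
        have h2 : HasDerivAt (fun x:ℝ => 1 - x^2/2 + x^4/24) (-(y - y^3/6)) y := by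
          have h4 := ((hasDerivAt_const y (1:ℝ)).sub ((hasDerivAt_pow 2 y).div_const 2)).add
            ((hasDerivAt_pow 4 y).div_const 24)
          refine h4.congr_deriv ?_; push_cast; ring
        have h5 := h2.sub (Real.hasDerivAt_cos y)
        exact h5.congr_deriv (by ring))
      (by norm_num)
      (fun y hy => by linarith [sin_ge3' hy]) hx
  linarith [h]

private lemma sin_le5' {x : ℝ} (hx : 0 ≤ x) : sin x ≤ x - x^3/6 + x^5/120 := by
  have h := aux_nonneg' (f := fun x => (x - x^3/6 + x^5/120) - Real.sin x)
      (f' := fun x => (1 - x^2/2 + x^4/24) - Real.cos x) (fun y => by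
        have h2 : HasDerivAt (fun x:ℝ => x - x^3/6 + x^5/120) (1 - y^2/2 + y^4/24) y := by
          have h4 := ((hasDerivAt_id y).sub ((hasDerivAt_pow 3 y).div_const 6)).add
            ((hasDerivAt_pow 5 y).div_const 120)
          refine h4.congr_deriv ?_; push_cast; ring
        exact h2.sub (Real.hasDerivAt_sin y))
      (by norm_num)
      (fun y hy => by linarith [cos_le4' hy]) hx
  linarith [h]

private lemma cos_ge6' {x : ℝ} (hx : 0 ≤ x) : 1 - x^2/2 + x^4/24 - x^6/720 ≤ cos x := by
  have h := aux_nonneg' (f := fun x => Real.cos x - (1 - x^2/2 + x^4/24 - x^6/720))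
      (f' := fun x => (x - x^3/6 + x^5/120) - Real.sin x) (fun y => by
        have h2 : HasDerivAt (fun x:ℝ => 1 - x^2/2 + x^4/24 - x^6/720) (-(y - y^3/6 + y^5/120)) y := by
          have h4 := (((hasDerivAt_const y (1:ℝ)).sub ((hasDerivAt_pow 2 y).div_const 2)).add
            ((hasDerivAt_pow 4 y).div_const 24)).sub ((hasDerivAt_pow 6 y).div_const 720)
          refine h4.congr_deriv ?_; push_cast; ring
        have h5 := (Real.hasDerivAt_cos y).sub h2
        exact h5.congr_deriv (by ring))
      (by norm_num)
      (fun y hy => by linarith [sin_le5' hy]) hx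
  linarith [h]

private lemma sin_ge7' {x : ℝ} (hx : 0 ≤ x) :
    x - x^3/6 + x^5/120 - x^7/5040 ≤ sin x := by
  have h := aux_nonneg' (f := fun x => Real.sin x - (x - x^3/6 + x^5/120 - x^7/5040))
      (f' := fun x => Real.cos x - (1 - x^2/2 + x^4/24 - x^6/720)) (fun y => by
        have h2 : HasDerivAt (fun x:ℝ => x - x^3/6 + x^5/120 - x^7/5040)
            (1 - y^2/2 + y^4/24 - y^6/720) y := by
          have h4 := (((hasDerivAt_id y).sub ((hasDerivAt_pow 3 y).div_const 6)).add
            ((hasDerivAt_pow 5 y).div_const 120)).sub ((hasDerivAt_pow 7 y).div_const 5040)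
          refine h4.congr_deriv ?_; push_cast; ring
        exact (Real.hasDerivAt_sin y).sub h2)
      (by norm_num)
      (fun y hy => by linarith [cos_ge6' hy]) hx
  linarith [h]


set_option maxHeartbeats 1000000 in
private lemma poly_R (p θ : ℝ) (hp1 : 3.141592 < p) (hp2 : p < 3.141593)
    (h0 : 0 < θ) (h1 : θ ≤ p) :
    0 ≤ 27/2*p^3 + θ*(12*p^2 + 9/5*p^4) + θ^2*(7/2*p - 27/20*p^3 - 9/80*p^5)
      + θ^3*(1/3 - 13/10*p^2 - 3/56*p^4) + θ^4*(-43/120*p + 3/56*p^3)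
      + θ^5*(-1/30 + 1/21*p^2) + θ^6*(13/1008*p) + θ^7*(1/840) := by
  have hθ : θ < 3.141593 := lt_of_le_of_lt h1 hp2
  have hp0 : (0:ℝ) < p := by linarith
  have hsq : 9.86960 ≤ p^2 := by nlinarith [sq_nonneg (p - 3.141592)]
  have hsq' : p^2 ≤ 9.86962 := by nlinarith [sq_nonneg (p - 3.141593)]
  have hcb : 31.006 ≤ p^3 := by nlinarith [mul_le_mul_of_nonneg_right hsq hp0.le]
  have hcb' : p^3 ≤ 31.007 := by nlinarith [mul_le_mul_of_nonneg_right hsq' hp0.le, hp2]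
  have hq : 97.40 ≤ p^4 := by nlinarith [mul_le_mul_of_nonneg_right hcb hp0.le]
  have hq' : p^4 ≤ 97.41 := by nlinarith [mul_le_mul_of_nonneg_right hcb' hp0.le, hp2]
  have h5' : p^5 ≤ 306.04 := by nlinarith [mul_le_mul_of_nonneg_right hq' hp0.le, hp2]
  have c4 : (0:ℝ) ≤ -43/120*p + 3/56*p^3 := by nlinarith [mul_le_mul_of_nonneg_right hsq hp0.le]
  have c5 : (0:ℝ) ≤ -1/30 + 1/21*p^2 := by linarith
  have t4 : 0 ≤ θ^4*(-43/120*p + 3/56*p^3) := by positivity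
  have t5 : 0 ≤ θ^5*(-1/30 + 1/21*p^2) := by positivity
  have t6 : 0 ≤ θ^6*(13/1008*p) := by positivity
  have t7 : 0 ≤ θ^7*(1/840) := by positivity
  have hc0 : (418:ℝ) ≤ 27/2*p^3 := by linarith
  have hc1 : (293:ℝ) ≤ 12*p^2 + 9/5*p^4 := by linarith
  have hc2 : (-66:ℝ) ≤ 7/2*p - 27/20*p^3 - 9/80*p^5 := by linarith
  have hc3 : (-18:ℝ) ≤ 1/3 - 13/10*p^2 - 3/56*p^4 := by linarith
  have e1 : θ^2 ≤ 3.141593*θ := by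
    rw [pow_two]; exact mul_le_mul_of_nonneg_right hθ.le h0.le
  have eθsq : θ^2 ≤ (9.86962:ℝ) := by nlinarith [sq_nonneg (θ - 3.141593)]
  have e2 : θ^3 ≤ 9.86962*θ := by
    calc θ^3 = θ^2*θ := by ring
      _ ≤ 9.86962*θ := mul_le_mul_of_nonneg_right eθsq h0.le
  have key : (0:ℝ) ≤ 418 + 293*θ - 66*θ^2 - 18*θ^3 := by linarith
  have m1 : 293*θ ≤ θ*(12*p^2 + 9/5*p^4) := by
    calc 293*θ = θ*293 := by ring
      _ ≤ θ*(12*p^2 + 9/5*p^4) := mul_le_mul_of_nonneg_left hc1 h0.le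
  have m2 : θ^2*(-66) ≤ θ^2*(7/2*p - 27/20*p^3 - 9/80*p^5) :=
    mul_le_mul_of_nonneg_left hc2 (sq_nonneg θ)
  have m3 : θ^3*(-18) ≤ θ^3*(1/3 - 13/10*p^2 - 3/56*p^4) :=
    mul_le_mul_of_nonneg_left hc3 (by positivity)
  linarith

private lemma g_pos' {θ : ℝ} (h0 : 0 < θ) (h1 : θ ≤ π) : 0 < g θ := by
  unfold g
  rw [Real.arccos_pos, div_lt_one Real.pi_pos]
  have hs := Real.sin_lt h0
  have hc : (π - θ) * Real.cos θ ≤ π - θ := by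
    nlinarith [Real.cos_le_one θ]
  linarith

set_option maxHeartbeats 1000000 in
private lemma g_le' {θ : ℝ} (h0 : 0 < θ) (h1 : θ ≤ π) : g θ ≤ 3*π*θ/(3*π+θ) := by
  have hp1 : (3.141592:ℝ) < π := Real.pi_gt_d6
  have hp2 : π < 3.141593 := Real.pi_lt_d6
  have hs : (0:ℝ) < 3*π+θ := by linarith
  set b := 3*π*θ/(3*π+θ) with hbdef
  have hb0 : 0 < b := by
    rw [hbdef]; positivity
  have hbθ : b ≤ θ := by
    rw [hbdef, div_le_iff₀ hs]; nlinarith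
  have hbπ : b ≤ π := hbθ.trans h1
  have hQ := poly_R π θ hp1 hp2 h0 h1
  have hs4 : (0:ℝ) < (3*π+θ)^4 := by positivity
  have hpoly : π*((3*π+θ)^4 - (3*π*θ)^2*(3*π+θ)^2/2 + (3*π*θ)^4/24)
      ≤ ((π-θ)*(1-θ^2/2+θ^4/24-θ^6/720) + (θ-θ^3/6+θ^5/120-θ^7/5040)) * (3*π+θ)^4 := by
    nlinarith [mul_nonneg (pow_nonneg h0.le 4) hQ]
  have hb4 : π*(1 - b^2/2 + b^4/24)
      ≤ (π-θ)*(1-θ^2/2+θ^4/24-θ^6/720) + (θ-θ^3/6+θ^5/120-θ^7/5040) := by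
    rw [← mul_le_mul_iff_of_pos_right hs4]
    have e1 : (π*(1 - b^2/2 + b^4/24))*(3*π+θ)^4
        = π*((3*π+θ)^4 - (3*π*θ)^2*(3*π+θ)^2/2 + (3*π*θ)^4/24) := by
      rw [hbdef]
      field_simp
    rw [e1]
    exact hpoly
  have h4 : π * Real.cos b ≤ (π-θ) * Real.cos θ + Real.sin θ := by
    have hA := cos_ge6' h0.le
    have hB := sin_ge7' h0.le
    have hC := cos_le4' hb0.le
    have h5 : (π-θ)*(1-θ^2/2+θ^4/24-θ^6/720) ≤ (π-θ)*Real.cos θ :=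
      mul_le_mul_of_nonneg_left hA (by linarith)
    have h6 : π*Real.cos b ≤ π*(1-b^2/2+b^4/24) :=
      mul_le_mul_of_nonneg_left hC Real.pi_pos.le
    linarith
  have hcF : Real.cos b ≤ ((π - θ) * Real.cos θ + Real.sin θ) / π := by
    rw [le_div_iff₀ Real.pi_pos]; linarith
  have harc : g θ ≤ Real.arccos (Real.cos b) := by
    unfold g
    simp only [Real.arccos]
    have := Real.monotone_arcsin hcF
    linarith
  rwa [Real.arccos_cos hb0.le hbπ] at harc

theorem thetaCheck_upper_bound (i : ℕ) :
    g^[i] π ≤ 3 * π / ((i : ℝ) + 3) := by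
  suffices h : ∀ j : ℕ, 0 < g^[j] π ∧ g^[j] π ≤ 3 * π / ((j : ℝ) + 3) from (h i).2
  intro j
  induction j with
  | zero =>
    constructor
    · simpa using Real.pi_pos
    · simp only [Function.iterate_zero_apply, Nat.cast_zero, zero_add]
      rw [le_div_iff₀ (by norm_num : (0:ℝ) < 3)]
      ring_nf
      linarith [Real.pi_pos]
  | succ n ih =>
    obtain ⟨hpos, hle⟩ := ih
    have hn3 : (0:ℝ) < (n:ℝ) + 3 := by positivity
    have hbound : 3 * π / ((n:ℝ) + 3) ≤ π := by
      rw [div_le_iff₀ hn3]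
      nlinarith [Real.pi_pos, Nat.cast_nonneg (α := ℝ) n]
    have hθπ : g^[n] π ≤ π := hle.trans hbound
    rw [Function.iterate_succ_apply']
    refine ⟨g_pos' hpos hθπ, ?_⟩
    set θ := g^[n] π
    have h1 : g θ ≤ 3*π*θ/(3*π+θ) := g_le' hpos hθπ
    have hsθ : (0:ℝ) < 3*π+θ := by linarith [Real.pi_pos]
    have hh : (0:ℝ) < 3*π/((n:ℝ)+3) := by positivity
    have hsh : (0:ℝ) < 3*π+3*π/((n:ℝ)+3) := by linarith
    have h2 : 3*π*θ/(3*π+θ) ≤ 3*π*(3*π/((n:ℝ)+3))/(3*π+3*π/((n:ℝ)+3)) := by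
      rw [div_le_div_iff₀ hsθ hsh]
      nlinarith [mul_nonneg (mul_nonneg (by norm_num : (0:ℝ) ≤ 9) (sq_nonneg π))
        (by linarith : 0 ≤ 3*π/((n:ℝ)+3) - θ)]
    have h3 : 3*π*(3*π/((n:ℝ)+3))/(3*π+3*π/((n:ℝ)+3)) = 3*π/((n:ℝ)+1+3) := by
      rw [eq_div_iff (by positivity : ((n:ℝ)+1+3) ≠ 0)]
      field_simp
      ring
    push_cast
    calc g θ ≤ 3*π*θ/(3*π+θ) := h1
      _ ≤ 3*π*(3*π/((n:ℝ)+3))/(3*π+3*π/((n:ℝ)+3)) := h2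
      _ = 3*π/((n:ℝ)+1+3) := h3
end

section
/- Let g(θ) = arccos(((π − θ)cos θ + sin θ)/π), let θ̌_0 = π, θ̌_{i+1} = g(θ̌_i), and define ρ_d = Σ_{i=0}^{d−1} (sin θ̌_i / π) ∏_{j=i+1}^{d−1} ((π − θ̌_j)/π). Then ρ_d → 1 as d → ∞. -/
open Real

set_option maxHeartbeats 1000000

namespace RhoProof

noncomputable def hfun (x : ℝ) : ℝ := ((π - x) * Real.cos x + Real.sin x) / π

lemma g_eq (x : ℝ) : g x = Real.arccos (hfun x) := rfl

/-- Generic: nonnegativity from derivative. -/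
lemma nonneg_of_deriv {f f' : ℝ → ℝ} (hd : ∀ t, HasDerivAt f (f' t) t)
    (h0 : f 0 = 0) (hf' : ∀ t, 0 < t → 0 ≤ f' t) {x : ℝ} (hx : 0 ≤ x) : 0 ≤ f x := by
  have hmono : MonotoneOn f (Set.Ici 0) := by
    apply monotoneOn_of_deriv_nonneg (convex_Ici 0)
    · exact fun t _ => (hd t).continuousAt.continuousWithinAt
    · intro t _
      exact ((hd t).differentiableAt).differentiableWithinAt
    · intro t ht
      rw [interior_Ici] at ht
      rw [(hd t).deriv]
      exact hf' t ht
  have := hmono (Set.mem_Ici.2 le_rfl) (Set.mem_Ici.2 hx) hx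
  linarith [h0 ▸ this]

lemma sin_ge_cubic {x : ℝ} (hx : 0 ≤ x) : x - x ^ 3 / 6 ≤ Real.sin x := by
  have h : 0 ≤ Real.sin x - x + x ^ 3 / 6 := by
    apply nonneg_of_deriv (f' := fun t => Real.cos t - 1 + 3 * t ^ 2 / 6) _ (by simp) _ hx
    · intro t
      have h1 : HasDerivAt (fun t : ℝ => Real.sin t - t + t ^ 3 / 6)
          (Real.cos t - 1 + 3 * t ^ (3 - 1) / 6) t :=
        ((Real.hasDerivAt_sin t).sub (hasDerivAt_id t)).add ((hasDerivAt_pow 3 t).div_const 6)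
      simpa using h1
    · intro t _
      have := Real.one_sub_sq_div_two_le_cos (x := t)
      nlinarith
  linarith

lemma A1 {x : ℝ} (hx : 0 ≤ x) : Real.sin x - x * Real.cos x ≤ x ^ 3 / 3 := by
  have h : 0 ≤ x ^ 3 / 3 - (Real.sin x - x * Real.cos x) := by
    apply nonneg_of_deriv (f' := fun t => 3 * t ^ 2 / 3 - t * Real.sin t) _ (by simp) _ hx
    · intro t
      have h2 : HasDerivAt (fun t : ℝ => t * Real.cos t)
          (1 * Real.cos t + t * -Real.sin t) t :=
        (hasDerivAt_id t).mul (Real.hasDerivAt_cos t)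
      have h1 : HasDerivAt (fun t : ℝ => t ^ 3 / 3 - (Real.sin t - t * Real.cos t))
          (3 * t ^ (3 - 1) / 3 - (Real.cos t - (1 * Real.cos t + t * -Real.sin t))) t :=
        ((hasDerivAt_pow 3 t).div_const 3).sub ((Real.hasDerivAt_sin t).sub h2)
      convert h1 using 1
      ring
    · intro t ht
      have := Real.sin_le ht.le
      nlinarith
  linarith

lemma A2 {x : ℝ} (hx : 0 ≤ x) : x ^ 3 / 3 - x ^ 5 / 30 ≤ Real.sin x - x * Real.cos x := by
  have h : 0 ≤ Real.sin x - x * Real.cos x - x ^ 3 / 3 + x ^ 5 / 30 := by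
    apply nonneg_of_deriv
      (f' := fun t => t * Real.sin t - 3 * t ^ 2 / 3 + 5 * t ^ 4 / 30) _ (by simp) _ hx
    · intro t
      have h2 : HasDerivAt (fun t : ℝ => t * Real.cos t)
          (1 * Real.cos t + t * -Real.sin t) t :=
        (hasDerivAt_id t).mul (Real.hasDerivAt_cos t)
      have h1 : HasDerivAt
          (fun t : ℝ => Real.sin t - t * Real.cos t - t ^ 3 / 3 + t ^ 5 / 30)
          (Real.cos t - (1 * Real.cos t + t * -Real.sin t) - 3 * t ^ (3 - 1) / 3
            + 5 * t ^ (5 - 1) / 30) t :=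
        (((Real.hasDerivAt_sin t).sub h2).sub ((hasDerivAt_pow 3 t).div_const 3)).add
          ((hasDerivAt_pow 5 t).div_const 30)
      convert h1 using 1
      ring
    · intro t ht
      have := sin_ge_cubic ht.le
      nlinarith
  linarith

lemma hfun_eq (x : ℝ) : hfun x = Real.cos x + (Real.sin x - x * Real.cos x) / π := by
  unfold hfun
  field_simp
  ring

lemma hfun_hasDeriv (t : ℝ) : HasDerivAt hfun (-(π - t) * Real.sin t / π) t := by
  have h1 : HasDerivAt (fun x : ℝ => (π - x) * Real.cos x + Real.sin x)
      (((0 - 1) * Real.cos t + (π - t) * -Real.sin t) + Real.cos t) t :=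
    (((hasDerivAt_const t π).sub (hasDerivAt_id t)).mul (Real.hasDerivAt_cos t)).add
      (Real.hasDerivAt_sin t)
  have h2 := h1.div_const π
  exact h2.congr_deriv (by ring)

lemma hfun_anti : AntitoneOn hfun (Set.Icc 0 π) := by
  apply antitoneOn_of_deriv_nonpos (convex_Icc 0 π)
  · exact fun t _ => (hfun_hasDeriv t).continuousAt.continuousWithinAt
  · intro t _
    exact (hfun_hasDeriv t).differentiableAt.differentiableWithinAt
  · intro t ht
    rw [interior_Icc] at ht
    rw [(hfun_hasDeriv t).deriv]
    have hs : 0 ≤ Real.sin t := Real.sin_nonneg_of_nonneg_of_le_pi ht.1.le ht.2.le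
    have : 0 ≤ (π - t) * Real.sin t := mul_nonneg (by linarith [ht.2]) hs
    have hπ := Real.pi_pos
    apply div_nonpos_of_nonpos_of_nonneg <;> nlinarith

lemma hfun_pi : hfun π = 0 := by unfold hfun; simp

lemma hfun_zero : hfun 0 = 1 := by
  unfold hfun
  simp [Real.pi_ne_zero]

lemma hfun_mem {x : ℝ} (hx : x ∈ Set.Icc 0 π) : 0 ≤ hfun x ∧ hfun x ≤ 1 := by
  constructor
  · have := hfun_anti hx (Set.mem_Icc.2 ⟨Real.pi_pos.le, le_rfl⟩) hx.2
    rw [hfun_pi] at this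
    exact this
  · have := hfun_anti (Set.mem_Icc.2 ⟨le_rfl, Real.pi_pos.le⟩) hx hx.1
    rw [hfun_zero] at this
    exact this

lemma arccos_le_arccos' {x y : ℝ} (h : x ≤ y) : Real.arccos y ≤ Real.arccos x := by
  rw [Real.arccos_eq_pi_div_two_sub_arcsin, Real.arccos_eq_pi_div_two_sub_arcsin]
  have := Real.monotone_arcsin h
  linarith

/-- Key upper inequality. -/
lemma keyU {u v : ℝ} (hu0 : 0 < u) (hu2 : u ≤ π / 2) (hv0 : 0 ≤ v) (hvu : v ≤ u)
    (huv : u - v ≤ u ^ 3 / (3 * π ^ 2)) : Real.cos v ≤ hfun u := by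
  have hπ := Real.pi_gt_three
  have hπ' := Real.pi_lt_d2
  have hA2 := A2 hu0.le
  -- cos v - cos u ≤ u - v
  have h1 : Real.cos v - Real.cos u ≤ u - v := by
    have hid : Real.cos v - Real.cos u
        = 2 * Real.sin ((u + v) / 2) * Real.sin ((u - v) / 2) := by
      have h := Real.cos_sub_cos v u
      rw [add_comm v u] at h
      have hs : Real.sin ((v - u) / 2) = -Real.sin ((u - v) / 2) := by
        rw [show (v - u) / 2 = -((u - v) / 2) by ring, Real.sin_neg]
      rw [hs] at h
      linarith
    rw [hid]
    have hsn : 0 ≤ Real.sin ((u - v) / 2) :=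
      Real.sin_nonneg_of_nonneg_of_le_pi (by linarith) (by linarith)
    have hs1 : Real.sin ((u + v) / 2) ≤ 1 := Real.sin_le_one _
    have hs2 : Real.sin ((u - v) / 2) ≤ (u - v) / 2 := Real.sin_le (by linarith)
    nlinarith
  have hu2sq : u ^ 2 ≤ π ^ 2 / 4 := by nlinarith
  have hnum : u ^ 3 / (3 * π ^ 2) ≤ (u ^ 3 / 3 - u ^ 5 / 30) / π := by
    rw [div_le_div_iff₀ (by positivity) Real.pi_pos]
    have h5 : u ^ 5 = u ^ 3 * u ^ 2 := by ring
    have h6 : u ^ 3 * u ^ 2 ≤ u ^ 3 * (π ^ 2 / 4) :=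
      mul_le_mul_of_nonneg_left hu2sq (by positivity)
    have hπ2l : (9:ℝ) ≤ π ^ 2 := by nlinarith
    have hπ2u : π ^ 2 ≤ 10 := by nlinarith
    have hπ4 : π ^ 4 ≤ 100 := by nlinarith
    have hsc : π + π ^ 4 / 40 ≤ π ^ 2 := by linarith
    have h7 := mul_le_mul_of_nonneg_left hsc (le_of_lt (pow_pos hu0 3))
    have h8 := mul_le_mul_of_nonneg_left h6 (by positivity : (0:ℝ) ≤ π ^ 2 / 10)
    nlinarith
  have hdiv : (u ^ 3 / 3 - u ^ 5 / 30) / π ≤ (Real.sin u - u * Real.cos u) / π :=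
    div_le_div_of_nonneg_right hA2 Real.pi_pos.le
  rw [hfun_eq]
  linarith

/-- Numeric part of the lower bound step. -/
lemma lower_numeric {a : ℝ} (ha : 2 ≤ a) :
    (π / a) ^ 3 / 3 / π ≤
      2 * (π / (a + 1) - (π / (a + 1)) ^ 3 / 6) *
        (π / (2 * a * (a + 1)) - (π / (2 * a * (a + 1))) ^ 3 / 6) := by
  have hπ := Real.pi_gt_three
  have hπ' := Real.pi_lt_d2
  have ha0 : (0:ℝ) < a := by linarith
  have ha1 : (0:ℝ) < a + 1 := by linarith
  have hπ0 := Real.pi_pos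
  have eqL : (π / a) ^ 3 / 3 / π = π ^ 2 / (3 * a ^ 3) := by
    field_simp
  have eqR : 2 * (π / (a + 1) - (π / (a + 1)) ^ 3 / 6) *
        (π / (2 * a * (a + 1)) - (π / (2 * a * (a + 1))) ^ 3 / 6)
      = π ^ 2 * ((6 * (a + 1) ^ 2 - π ^ 2) * (24 * a ^ 2 * (a + 1) ^ 2 - π ^ 2)) /
          (144 * a ^ 3 * (a + 1) ^ 6) := by
    field_simp
    ring
  rw [eqL, eqR]
  rw [div_le_div_iff₀ (by positivity) (by positivity)]
  have hπ2u : π ^ 2 ≤ 10 := by nlinarith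
  have hπ2l : (0:ℝ) ≤ π ^ 2 := by positivity
  have key : 48 * (a + 1) ^ 6 ≤ (6 * (a + 1) ^ 2 - π ^ 2) * (24 * a ^ 2 * (a + 1) ^ 2 - π ^ 2) := by
    nlinarith [sq_nonneg (π ^ 2), sq_nonneg (a - 2), sq_nonneg (a + 1), mul_pos ha0 ha0,
      mul_pos (mul_pos ha0 ha0) ha0, sq_nonneg ((a + 1) ^ 2), mul_pos ha1 ha1,
      mul_le_mul_of_nonneg_left hπ2u (le_of_lt (mul_pos ha1 ha1)),
      mul_le_mul_of_nonneg_left hπ2u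
        (by positivity : (0:ℝ) ≤ (a + 1) ^ 2 * (1 + 4 * a ^ 2))]
  calc π ^ 2 * (144 * a ^ 3 * (a + 1) ^ 6) = (π ^ 2 * (3 * a ^ 3)) * (48 * (a + 1) ^ 6) := by ring
    _ ≤ (π ^ 2 * (3 * a ^ 3)) *
        ((6 * (a + 1) ^ 2 - π ^ 2) * (24 * a ^ 2 * (a + 1) ^ 2 - π ^ 2)) :=
        mul_le_mul_of_nonneg_left key (by positivity)
    _ = π ^ 2 * ((6 * (a + 1) ^ 2 - π ^ 2) * (24 * a ^ 2 * (a + 1) ^ 2 - π ^ 2)) *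
        (3 * a ^ 3) := by ring

/-- Key lower inequality. -/
lemma keyL {a : ℝ} (ha : 2 ≤ a) : hfun (π / a) ≤ Real.cos (π / (a + 1)) := by
  have hπ := Real.pi_gt_three
  have hπ' := Real.pi_lt_d2
  have ha0 : (0:ℝ) < a := by linarith
  have ha1 : (0:ℝ) < a + 1 := by linarith
  have hπ0 := Real.pi_pos
  set x := π / a with hxdef
  set v := π / (a + 1) with hvdef
  have hx0 : 0 < x := by positivity
  have hv0 : 0 < v := by positivity
  have hxle : x ≤ π / 2 := by
    rw [hxdef]
    apply div_le_div_of_nonneg_left hπ0.le (by norm_num) ha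
  have hvx : v < x := by
    rw [hxdef, hvdef]
    apply div_lt_div_of_pos_left hπ0 ha0 (by linarith)
  have hvle : v ≤ π / 3 := by
    rw [hvdef]
    apply div_le_div_of_nonneg_left hπ0.le (by norm_num) (by linarith)
  have hw : (x - v) / 2 = π / (2 * a * (a + 1)) := by
    rw [hxdef, hvdef]
    field_simp
    ring
  set w := (x - v) / 2 with hwdef
  have hw0 : 0 < w := by rw [hwdef]; linarith
  have hwle : w ≤ π / 4 := by
    rw [hwdef]
    have : 0 < v := hv0
    linarith
  -- hfun x ≤ cos x + x^3/3/π
  have key1 : hfun x ≤ Real.cos x + x ^ 3 / 3 / π := by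
    rw [hfun_eq]
    have := div_le_div_of_nonneg_right (A1 hx0.le) Real.pi_pos.le
    linarith
  -- cos x = cos v - 2 sin((x+v)/2) sin(w)
  have key2 : Real.cos x = Real.cos v - 2 * Real.sin ((x + v) / 2) * Real.sin w := by
    have h := Real.cos_sub_cos x v
    rw [hwdef]
    linarith
  have key3 : Real.sin v ≤ Real.sin ((x + v) / 2) := by
    apply Real.sin_le_sin_of_le_of_le_pi_div_two (by linarith) (by linarith) (by linarith)
  have key4 : v - v ^ 3 / 6 ≤ Real.sin v := sin_ge_cubic hv0.le
  have key5 : w - w ^ 3 / 6 ≤ Real.sin w := sin_ge_cubic hw0.le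
  have hvnn : 0 ≤ v - v ^ 3 / 6 := by
    have hv2 : v ^ 2 ≤ (π / 3) ^ 2 := by nlinarith
    have := mul_le_mul_of_nonneg_left hv2 hv0.le
    nlinarith
  have hwnn : 0 ≤ w - w ^ 3 / 6 := by
    have hw2 : w ^ 2 ≤ (π / 4) ^ 2 := by nlinarith
    have := mul_le_mul_of_nonneg_left hw2 hw0.le
    nlinarith
  have hsv : 0 ≤ Real.sin ((x + v) / 2) := le_trans hvnn (le_trans key4 key3)
  have prod : (v - v ^ 3 / 6) * (w - w ^ 3 / 6)
      ≤ Real.sin ((x + v) / 2) * Real.sin w :=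
    mul_le_mul (le_trans key4 key3) key5 hwnn hsv
  have key2' : Real.cos x = Real.cos v - 2 * (Real.sin ((x + v) / 2) * Real.sin w) := by
    linear_combination key2
  have numeric := lower_numeric ha
  rw [← hxdef, ← hvdef, ← hw] at numeric
  have numeric' : x ^ 3 / 3 / π ≤ 2 * ((v - v ^ 3 / 6) * (w - w ^ 3 / 6)) := by
    linear_combination numeric
  linarith

lemma sqrt6_pos : (0:ℝ) < Real.sqrt 6 := Real.sqrt_pos.2 (by norm_num)

lemma sqrt6_sq : Real.sqrt 6 ^ 2 = 6 := Real.sq_sqrt (by norm_num)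

lemma sqrt6_le : Real.sqrt 6 ≤ 2.45 := by
  rw [show (2.45:ℝ) = Real.sqrt (2.45 ^ 2) from (Real.sqrt_sq (by norm_num)).symm]
  exact Real.sqrt_le_sqrt (by norm_num)

/-- Numeric part of the upper bound step. -/
lemma upper_numeric {n : ℝ} (hn : 6 ≤ n) :
    π * Real.sqrt 6 / (2 * Real.sqrt n) - π * Real.sqrt 6 / (2 * Real.sqrt (n + 1))
      ≤ (π * Real.sqrt 6 / (2 * Real.sqrt n)) ^ 3 / (3 * π ^ 2) := by
  have hπ0 := Real.pi_pos
  set s := Real.sqrt n with hsdef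
  set t := Real.sqrt (n + 1) with htdef
  have hs : 0 < s := Real.sqrt_pos.2 (by linarith)
  have ht : 0 < t := Real.sqrt_pos.2 (by linarith)
  have hs2 : s ^ 2 = n := Real.sq_sqrt (by linarith)
  have ht2 : t ^ 2 = n + 1 := Real.sq_sqrt (by linarith)
  have hst : s ≤ t := Real.sqrt_le_sqrt (by linarith)
  have h60 := sqrt6_pos
  have h6sq := sqrt6_sq
  -- key : t * (2*s^2 - 1) ≤ 2*s^3
  have key : t * (2 * s ^ 2 - 1) ≤ 2 * s ^ 3 := by
    apply le_of_pow_le_pow_left₀ (n := 2) two_ne_zero (by positivity)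
    have expand : (t * (2 * s ^ 2 - 1)) ^ 2 = (n + 1) * (2 * n - 1) ^ 2 := by
      rw [mul_pow, ht2]
      congr 1
      nlinarith [hs2]
    rw [expand]
    have : (2 * s ^ 3) ^ 2 = 4 * n ^ 3 := by
      have : (s ^ 3) ^ 2 = (s ^ 2) ^ 3 := by ring
      rw [mul_pow, this, hs2]
      ring
    rw [this]
    nlinarith
  -- reduce to polynomial inequality
  have h63 : Real.sqrt 6 ^ 3 = 6 * Real.sqrt 6 := by rw [pow_succ, h6sq]
  have hform : (π * Real.sqrt 6 / (2 * s)) ^ 3 / (3 * π ^ 2)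
      = π * Real.sqrt 6 / (4 * s ^ 3) := by
    rw [div_pow, mul_pow, h63, mul_pow]
    field_simp
    ring
  rw [hform]
  rw [div_sub_div _ _ (by positivity) (by positivity), div_le_div_iff₀ (by positivity) (by positivity)]
  -- (π√6 * (2t) - π√6 * (2s)) * (4 s^3) ≤ π√6 * (2s * 2t) ... after clearing
  nlinarith [mul_le_mul_of_nonneg_left key (by positivity : (0:ℝ) ≤ 4 * s * (π * Real.sqrt 6)),
    mul_pos hs ht, mul_pos (mul_pos hπ0 h60) (mul_pos hs ht)]

noncomputable def th (i : ℕ) : ℝ := g^[i] π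

lemma th_zero : th 0 = π := rfl

lemma th_succ (i : ℕ) : th (i + 1) = Real.arccos (hfun (th i)) := by
  unfold th
  rw [Function.iterate_succ_apply']
  rfl

lemma th_mem (i : ℕ) : th i ∈ Set.Icc 0 π := by
  cases i with
  | zero => rw [th_zero]; exact ⟨Real.pi_pos.le, le_rfl⟩
  | succ n =>
    rw [th_succ]
    exact ⟨Real.arccos_nonneg _, Real.arccos_le_pi _⟩

lemma th_one : th 1 = π / 2 := by
  rw [th_succ, th_zero, hfun_pi, Real.arccos_zero]

lemma th_lower : ∀ i : ℕ, π / (i + 1) ≤ th i := by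
  intro i
  induction i with
  | zero => rw [th_zero]; norm_num
  | succ n ih =>
    rcases Nat.eq_zero_or_pos n with rfl | hn
    · rw [th_one]
      norm_num
    · have hπ0 := Real.pi_pos
      have hn2 : (2:ℝ) ≤ (n:ℝ) + 1 := by
        have : (1:ℕ) ≤ n := hn
        have : (1:ℝ) ≤ (n:ℝ) := by exact_mod_cast this
        linarith
      have hkey := keyL (a := (n:ℝ) + 1) hn2
      have hmem1 : π / ((n:ℝ) + 1) ∈ Set.Icc 0 π := by
        constructor
        · positivity
        · apply div_le_self hπ0.le (by linarith)
      have hanti : hfun (th n) ≤ hfun (π / ((n:ℝ) + 1)) :=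
        hfun_anti hmem1 (th_mem n) ih
      have hle : hfun (th n) ≤ Real.cos (π / ((n:ℝ) + 1 + 1)) := le_trans hanti hkey
      have harc := arccos_le_arccos' hle
      have hmem2 : (0:ℝ) ≤ π / ((n:ℝ) + 1 + 1) ∧ π / ((n:ℝ) + 1 + 1) ≤ π := by
        constructor
        · positivity
        · apply div_le_self hπ0.le (by linarith)
      rw [Real.arccos_cos hmem2.1 hmem2.2] at harc
      rw [th_succ]
      have hcast : ((n:ℝ) + 1) + 1 = ((n + 1 : ℕ) : ℝ) + 1 := by push_cast; ring
      rw [hcast] at harc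
      exact harc

lemma th_upper : ∀ i : ℕ, 1 ≤ i → th i ≤ π * Real.sqrt 6 / (2 * Real.sqrt (i + 5)) := by
  intro i hi
  induction i, hi using Nat.le_induction with
  | base =>
    rw [th_one]
    have : ((1:ℕ):ℝ) + 5 = 6 := by norm_num
    rw [this]
    rw [div_le_div_iff₀ (by norm_num) (by positivity)]
    nlinarith [sqrt6_sq, sqrt6_pos]
  | succ n hn ih =>
    have hπ0 := Real.pi_pos
    have h60 := sqrt6_pos
    have hn6 : (6:ℝ) ≤ (n:ℝ) + 5 := by
      have : (1:ℝ) ≤ (n:ℝ) := by exact_mod_cast hn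
      linarith
    set u := π * Real.sqrt 6 / (2 * Real.sqrt ((n:ℝ) + 5)) with hudef
    set v := π * Real.sqrt 6 / (2 * Real.sqrt ((n:ℝ) + 5 + 1)) with hvdef
    have hsn : (0:ℝ) < Real.sqrt ((n:ℝ) + 5) := Real.sqrt_pos.2 (by linarith)
    have hsn1 : (0:ℝ) < Real.sqrt ((n:ℝ) + 5 + 1) := Real.sqrt_pos.2 (by linarith)
    have hu0 : 0 < u := by rw [hudef]; positivity
    have hv0 : 0 < v := by rw [hvdef]; positivity
    have hmono : Real.sqrt 6 ≤ Real.sqrt ((n:ℝ) + 5) := Real.sqrt_le_sqrt hn6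
    have hu2 : u ≤ π / 2 := by
      rw [hudef]
      have h1 : π * Real.sqrt 6 / (2 * Real.sqrt ((n:ℝ) + 5)) ≤ π * Real.sqrt 6 / (2 * Real.sqrt 6) :=
        div_le_div_of_nonneg_left (by positivity) (by positivity) (by linarith)
      have h2 : π * Real.sqrt 6 / (2 * Real.sqrt 6) = π / 2 := by
        field_simp
      linarith
    have hvu : v ≤ u := by
      rw [hudef, hvdef]
      apply div_le_div_of_nonneg_left (by positivity) (by positivity)
      have := Real.sqrt_le_sqrt (show (n:ℝ) + 5 ≤ (n:ℝ) + 5 + 1 by linarith)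
      linarith
    have hnum := upper_numeric hn6
    rw [← hudef, ← hvdef] at hnum
    have hcos : Real.cos v ≤ hfun u := keyU hu0 hu2 hv0.le hvu hnum
    have humem : u ∈ Set.Icc 0 π := ⟨hu0.le, by linarith⟩
    have hanti : hfun u ≤ hfun (th n) := hfun_anti (th_mem n) humem ih
    have harc := arccos_le_arccos' (le_trans hcos hanti)
    rw [Real.arccos_cos hv0.le (by linarith)] at harc
    rw [th_succ]
    have hcast : ((n + 1 : ℕ) : ℝ) + 5 = (n:ℝ) + 5 + 1 := by push_cast; ring
    rw [hcast]
    rw [← hvdef]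
    exact harc

noncomputable def S (d : ℕ) : ℝ :=
  ∑ i ∈ Finset.range d, Real.sin (th i) / π * ∏ j ∈ Finset.Ico (i + 1) d, (π - th j) / π

noncomputable def E (d : ℕ) : ℝ := 1 - S d

lemma S_succ (d : ℕ) : S (d + 1) = (π - th d) / π * S d + Real.sin (th d) / π := by
  unfold S
  rw [Finset.sum_range_succ, Finset.Ico_self, Finset.prod_empty, mul_one]
  congr 1
  have hcong : ∀ i ∈ Finset.range d,
      Real.sin (th i) / π * ∏ j ∈ Finset.Ico (i + 1) (d + 1), (π - th j) / π
      = (π - th d) / π * (Real.sin (th i) / π * ∏ j ∈ Finset.Ico (i + 1) d, (π - th j) / π) := by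
    intro i hi
    rw [Finset.prod_Ico_succ_top (Finset.mem_range.1 hi)]
    ring
  rw [Finset.sum_congr rfl hcong, ← Finset.mul_sum]

lemma S_zero : S 0 = 0 := by simp [S]

lemma S_one : S 1 = 0 := by
  rw [show (1:ℕ) = 0 + 1 from rfl, S_succ, S_zero, th_zero, Real.sin_pi]
  simp

lemma E_succ (d : ℕ) :
    E (d + 1) = (π - th d) / π * E d + (th d - Real.sin (th d)) / π := by
  unfold E
  rw [S_succ]
  field_simp
  ring

lemma E_nonneg : ∀ d, 0 ≤ E d := by
  intro d
  induction d with
  | zero => norm_num [E, S_zero]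
  | succ n ih =>
    rw [E_succ]
    have hmem := th_mem n
    have h1 : 0 ≤ (π - th n) / π := div_nonneg (by linarith [hmem.2]) Real.pi_pos.le
    have h2 : 0 ≤ (th n - Real.sin (th n)) / π :=
      div_nonneg (by linarith [Real.sin_le hmem.1]) Real.pi_pos.le
    have := mul_nonneg h1 ih
    linarith

lemma final_numeric {n : ℕ} (hn : 1 ≤ n) :
    (n:ℝ) / ((n:ℝ) + 1) * (7 / Real.sqrt ((n:ℝ) + 1))
      + (π * Real.sqrt 6 / (2 * Real.sqrt ((n:ℝ) + 5))) ^ 3 / 6 / π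
      ≤ 7 / Real.sqrt ((n:ℝ) + 2) := by
  have hπ0 := Real.pi_pos
  have h60 := sqrt6_pos
  have hn1 : (1:ℝ) ≤ (n:ℝ) := by exact_mod_cast hn
  set s1 := Real.sqrt ((n:ℝ) + 1) with hs1def
  set s2 := Real.sqrt ((n:ℝ) + 2) with hs2def
  set s3 := Real.sqrt ((n:ℝ) + 5) with hs3def
  have hs1 : 0 < s1 := Real.sqrt_pos.2 (by linarith)
  have hs2 : 0 < s2 := Real.sqrt_pos.2 (by linarith)
  have hs3 : 0 < s3 := Real.sqrt_pos.2 (by linarith)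
  have hs1sq : s1 ^ 2 = (n:ℝ) + 1 := Real.sq_sqrt (by linarith)
  have hs2sq : s2 ^ 2 = (n:ℝ) + 2 := Real.sq_sqrt (by linarith)
  have hs13 : s1 ≤ s3 := Real.sqrt_le_sqrt (by linarith)
  have h63 : Real.sqrt 6 ^ 3 = 6 * Real.sqrt 6 := by rw [pow_succ, sqrt6_sq]
  have h1 : (n:ℝ) / ((n:ℝ) + 1) * (7 / s1) = 7 * (n:ℝ) / s1 ^ 3 := by
    have hs13' : s1 ^ 3 = s1 ^ 2 * s1 := by ring
    rw [hs13', hs1sq]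
    field_simp
  have h2 : (π * Real.sqrt 6 / (2 * s3)) ^ 3 / 6 / π = π ^ 2 * Real.sqrt 6 / 8 / s3 ^ 3 := by
    rw [div_pow, mul_pow, h63, mul_pow]
    field_simp
    ring
  have hπ4 := Real.pi_lt_d4
  have h3 : π ^ 2 * Real.sqrt 6 / 8 ≤ 31 / 10 := by
    have hπsq : π ^ 2 ≤ 9.87 := by nlinarith
    have h6le := sqrt6_le
    nlinarith [mul_le_mul hπsq h6le h60.le (by norm_num : (0:ℝ) ≤ 9.87)]
  have h4 : π ^ 2 * Real.sqrt 6 / 8 / s3 ^ 3 ≤ 31 / 10 / s1 ^ 3 := by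
    calc π ^ 2 * Real.sqrt 6 / 8 / s3 ^ 3 ≤ (31 / 10) / s3 ^ 3 :=
          div_le_div_of_nonneg_right h3 (by positivity)
      _ ≤ (31 / 10) / s1 ^ 3 := by
          apply div_le_div_of_nonneg_left (by norm_num) (by positivity)
          exact pow_le_pow_left₀ hs1.le hs13 3
  have h6 : (7 * (n:ℝ) + 31 / 10) / s1 ^ 3 ≤ 7 / s2 := by
    rw [div_le_div_iff₀ (by positivity) hs2]
    apply le_of_pow_le_pow_left₀ (n := 2) two_ne_zero (by positivity)
    have e1 : ((7 * (n:ℝ) + 31 / 10) * s2) ^ 2 = (7 * (n:ℝ) + 31 / 10) ^ 2 * ((n:ℝ) + 2) := by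
      rw [mul_pow, hs2sq]
    have e2 : (7 * s1 ^ 3) ^ 2 = 49 * ((n:ℝ) + 1) ^ 3 := by
      have : (s1 ^ 3) ^ 2 = (s1 ^ 2) ^ 3 := by ring
      rw [mul_pow, this, hs1sq]
      norm_num
    rw [e1, e2]
    nlinarith [sq_nonneg ((n:ℝ) - 1)]
  calc (n:ℝ) / ((n:ℝ) + 1) * (7 / s1) + (π * Real.sqrt 6 / (2 * s3)) ^ 3 / 6 / π
      = 7 * (n:ℝ) / s1 ^ 3 + π ^ 2 * Real.sqrt 6 / 8 / s3 ^ 3 := by rw [h1, h2]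
    _ ≤ 7 * (n:ℝ) / s1 ^ 3 + 31 / 10 / s1 ^ 3 := by linarith
    _ = (7 * (n:ℝ) + 31 / 10) / s1 ^ 3 := by rw [← add_div]
    _ ≤ 7 / s2 := h6

lemma E_le : ∀ d : ℕ, 1 ≤ d → E d ≤ 7 / Real.sqrt ((d:ℝ) + 1) := by
  intro d hd
  induction d, hd using Nat.le_induction with
  | base =>
    have hE1 : E 1 = 1 := by rw [E, S_one]; norm_num
    rw [hE1]
    have h2 : Real.sqrt (((1:ℕ):ℝ) + 1) ≤ 7 := by
      rw [show (7:ℝ) = Real.sqrt 49 from (Real.sqrt_eq_iff_eq_sq ?_ ?_).mpr ?_ |>.symm]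
      · exact Real.sqrt_le_sqrt (by norm_num)
      all_goals norm_num
    have hpos : 0 < Real.sqrt (((1:ℕ):ℝ) + 1) := Real.sqrt_pos.2 (by norm_num)
    rw [le_div_iff₀ hpos]
    linarith
  | succ n hn ih =>
    have hπ0 := Real.pi_pos
    have hmem := th_mem n
    have hθl := th_lower n
    have hθu := th_upper n hn
    have hn1 : (1:ℝ) ≤ (n:ℝ) := by exact_mod_cast hn
    rw [E_succ]
    set u := π * Real.sqrt 6 / (2 * Real.sqrt ((n:ℝ) + 5)) with hudef
    have hq : (π - th n) / π ≤ (n:ℝ) / ((n:ℝ) + 1) := by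
      have hnum : π - th n ≤ π - π / ((n:ℝ) + 1) := by linarith
      have := div_le_div_of_nonneg_right hnum hπ0.le
      have heq : (π - π / ((n:ℝ) + 1)) / π = (n:ℝ) / ((n:ℝ) + 1) := by
        field_simp
        ring
      linarith
    have hq0 : 0 ≤ (π - th n) / π := div_nonneg (by linarith [hmem.2]) hπ0.le
    have hterm1 : (π - th n) / π * E n ≤ (n:ℝ) / ((n:ℝ) + 1) * (7 / Real.sqrt ((n:ℝ) + 1)) :=
      mul_le_mul hq ih (E_nonneg n) (by positivity)
    have hsin : th n - Real.sin (th n) ≤ th n ^ 3 / 6 := by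
      have := sin_ge_cubic hmem.1
      linarith
    have hcube : th n ^ 3 ≤ u ^ 3 := pow_le_pow_left₀ hmem.1 hθu 3
    have hterm2 : (th n - Real.sin (th n)) / π ≤ u ^ 3 / 6 / π := by
      apply div_le_div_of_nonneg_right _ hπ0.le
      linarith
    have hfin := final_numeric hn
    rw [← hudef] at hfin
    have hcast : ((n + 1 : ℕ) : ℝ) + 1 = (n:ℝ) + 2 := by push_cast; ring
    rw [hcast]
    linarith

end RhoProof

theorem rho_tendsto_one :
    Filter.Tendsto
      (fun d : ℕ => ∑ i ∈ Finset.range d,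
        Real.sin (g^[i] π) / π * ∏ j ∈ Finset.Ico (i + 1) d, (π - g^[j] π) / π)
      Filter.atTop (nhds 1) := by
  have hSeq : (fun d : ℕ => ∑ i ∈ Finset.range d,
      Real.sin (g^[i] π) / π * ∏ j ∈ Finset.Ico (i + 1) d, (π - g^[j] π) / π)
      = RhoProof.S := rfl
  rw [hSeq]
  have hbound : ∀ d : ℕ, RhoProof.E d ≤ Real.sqrt (49 / ((d:ℝ) + 1)) := by
    intro d
    have heq : Real.sqrt (49 / ((d:ℝ) + 1)) = 7 / Real.sqrt ((d:ℝ) + 1) := by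
      rw [Real.sqrt_div (by norm_num : (0:ℝ) ≤ 49)]
      congr 1
      rw [show (49:ℝ) = 7 ^ 2 by norm_num, Real.sqrt_sq (by norm_num)]
    rw [heq]
    rcases Nat.eq_zero_or_pos d with rfl | hd
    · have hE0 : RhoProof.E 0 = 1 := by
        rw [RhoProof.E, RhoProof.S_zero]; norm_num
      rw [hE0]
      norm_num
    · exact RhoProof.E_le d hd
  have hg0 : Filter.Tendsto (fun d : ℕ => (49:ℝ) / ((d:ℝ) + 1)) Filter.atTop (nhds 0) := by
    have h := (tendsto_const_div_atTop_nhds_zero_nat (49:ℝ)).comp (Filter.tendsto_add_atTop_nat 1)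
    apply h.congr
    intro d
    simp only [Function.comp]
    push_cast
    ring
  have hg : Filter.Tendsto (fun d : ℕ => Real.sqrt (49 / ((d:ℝ) + 1)))
      Filter.atTop (nhds 0) := by
    have h' := (Real.continuous_sqrt.tendsto 0).comp hg0
    rw [Real.sqrt_zero] at h'
    exact h'
  have hE : Filter.Tendsto RhoProof.E Filter.atTop (nhds 0) :=
    squeeze_zero RhoProof.E_nonneg hbound hg
  have hSE : RhoProof.S = fun d => 1 - RhoProof.E d := by
    funext d
    simp [RhoProof.E]
  rw [hSE]
  have hfinal : Filter.Tendsto (fun d : ℕ => 1 - RhoProof.E d) Filter.atTop (nhds (1 - 0)) :=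
    Filter.Tendsto.sub tendsto_const_nhds hE
  simpa using hfinal
end

section
/- Fix 0 < ε < 0.1 and suppose W ∈ ℝ^{n×k} satisfies the Weight Distribution Condition with constant ε. Then for all nonzero x, y ∈ ℝ^k, the vectors W_{+,x}x and W_{+,y}y are nonzero, and |cos ∠(W_{+,x}x, W_{+,y}y) − ((π − θ_0)cos θ_0 + sin θ_0)/π| ≤ 5ε, where θ_0 = ∠(x, y). -/
open Real Matrix

/-- Spectral norm of a matrix, as the operator norm between Euclidean spaces. -/
noncomputable def spec {n k : ℕ} (M : Matrix (Fin n) (Fin k) ℝ) : ℝ :=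
  ‖LinearMap.toContinuousLinearMap (Matrix.toEuclideanLin M)‖

noncomputable def n2 {k : ℕ} (x : Fin k → ℝ) : ℝ := Real.sqrt (x ⬝ᵥ x)

/-- Angle between two vectors of `ℝ^k`. -/
noncomputable def ang {k : ℕ} (u v : Fin k → ℝ) : ℝ :=
  Real.arccos ((u ⬝ᵥ v) / (n2 u * n2 v))

/-- `W_{+,x} = diag(Wx > 0) W`: keep the rows of `W` that have positive inner product
with `x`, zeroing out the others. -/
noncomputable def Wplus {n k : ℕ} (W : Matrix (Fin n) (Fin k) ℝ) (x : Fin k → ℝ) :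
    Matrix (Fin n) (Fin k) ℝ :=
  Matrix.of fun i j => if 0 < W.mulVec x i then W i j else 0

/-- The Weight Distribution Condition with constant `ε`. -/
def WDC {n k : ℕ} (W : Matrix (Fin n) (Fin k) ℝ) (ε : ℝ) : Prop :=
  ∀ x y : Fin k → ℝ, x ≠ 0 → y ≠ 0 →
    ∃ M : Matrix (Fin k) (Fin k) ℝ,
      Mᵀ = M ∧
      M.mulVec ((n2 x)⁻¹ • x) = (n2 y)⁻¹ • y ∧
      M.mulVec ((n2 y)⁻¹ • y) = (n2 x)⁻¹ • x ∧
      (∀ z : Fin k → ℝ, z ⬝ᵥ x = 0 → z ⬝ᵥ y = 0 → M.mulVec z = 0) ∧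
      spec ((Wplus W x)ᵀ * (Wplus W y)
          - ((π - ang x y) / (2 * π)) • (1 : Matrix (Fin k) (Fin k) ℝ)
          - (Real.sin (ang x y) / (2 * π)) • M) ≤ ε

lemma dp_self_nonneg {k : ℕ} (v : Fin k → ℝ) : 0 ≤ v ⬝ᵥ v :=
  Finset.sum_nonneg fun i _ => mul_self_nonneg _

lemma n2_pos {k : ℕ} {v : Fin k → ℝ} (hv : v ≠ 0) : 0 < n2 v :=
  Real.sqrt_pos.2 (lt_of_le_of_ne (dp_self_nonneg v)
    (fun h => hv (dotProduct_self_eq_zero.1 h.symm)))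

lemma n2_sq {k : ℕ} (v : Fin k → ℝ) : n2 v * n2 v = v ⬝ᵥ v :=
  Real.mul_self_sqrt (dp_self_nonneg v)

lemma norm_equiv {k : ℕ} (v : Fin k → ℝ) :
    ‖(WithLp.equiv 2 (Fin k → ℝ)).symm v‖ = n2 v := by
  rw [EuclideanSpace.norm_eq]
  simp only [n2, dotProduct, WithLp.equiv_symm_apply, PiLp.toLp_apply, Real.norm_eq_abs, sq_abs]
  congr 1; exact Finset.sum_congr rfl fun i _ => (sq (v i)) ▸ (pow_two (v i))

lemma inner_equiv {k : ℕ} (u v : Fin k → ℝ) :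
    (inner ℝ ((WithLp.equiv 2 (Fin k → ℝ)).symm u) ((WithLp.equiv 2 (Fin k → ℝ)).symm v) : ℝ)
      = u ⬝ᵥ v := by
  rw [EuclideanSpace.inner_eq_star_dotProduct]
  simp [dotProduct, mul_comm]

lemma spec_bound {k : ℕ} (D : Matrix (Fin k) (Fin k) ℝ) (u v : Fin k → ℝ) :
    |u ⬝ᵥ (D *ᵥ v)| ≤ spec D * (n2 u * n2 v) := by
  have h1 : (Matrix.toEuclideanLin D) ((WithLp.equiv 2 (Fin k → ℝ)).symm v)
      = (WithLp.equiv 2 (Fin k → ℝ)).symm (D *ᵥ v) := by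
    rw [Matrix.toEuclideanLin_apply]; simp
  have h2 := abs_real_inner_le_norm ((WithLp.equiv 2 (Fin k → ℝ)).symm u)
      ((LinearMap.toContinuousLinearMap (Matrix.toEuclideanLin D)) ((WithLp.equiv 2 (Fin k → ℝ)).symm v))
  have h3 := (LinearMap.toContinuousLinearMap (Matrix.toEuclideanLin D)).le_opNorm
      ((WithLp.equiv 2 (Fin k → ℝ)).symm v)
  have h4 : ((LinearMap.toContinuousLinearMap (Matrix.toEuclideanLin D))
      ((WithLp.equiv 2 (Fin k → ℝ)).symm v)) = (WithLp.equiv 2 (Fin k → ℝ)).symm (D *ᵥ v) := by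
    rw [LinearMap.coe_toContinuousLinearMap']; exact h1
  rw [h4, inner_equiv, norm_equiv, norm_equiv] at h2
  rw [h4, norm_equiv, norm_equiv] at h3
  calc |u ⬝ᵥ (D *ᵥ v)| ≤ n2 u * n2 (D *ᵥ v) := h2
    _ ≤ n2 u * (spec D * n2 v) :=
        mul_le_mul_of_nonneg_left h3 (Real.sqrt_nonneg _)
    _ = spec D * (n2 u * n2 v) := by ring

lemma cauchy_schwarz_dp {k : ℕ} (u v : Fin k → ℝ) : |u ⬝ᵥ v| ≤ n2 u * n2 v := by
  have := abs_real_inner_le_norm ((WithLp.equiv 2 (Fin k → ℝ)).symm u)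
      ((WithLp.equiv 2 (Fin k → ℝ)).symm v)
  rwa [inner_equiv, norm_equiv, norm_equiv] at this

lemma cos_ang {k : ℕ} {u v : Fin k → ℝ} (hu : u ≠ 0) (hv : v ≠ 0) :
    Real.cos (ang u v) = (u ⬝ᵥ v) / (n2 u * n2 v) := by
  have hpos : 0 < n2 u * n2 v := mul_pos (n2_pos hu) (n2_pos hv)
  have h := cauchy_schwarz_dp u v
  have h1 : |(u ⬝ᵥ v) / (n2 u * n2 v)| ≤ 1 := by
    rw [abs_div, abs_of_pos hpos, div_le_one hpos]; exact h
  rw [abs_le] at h1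
  exact Real.cos_arccos h1.1 h1.2

lemma ang_self {k : ℕ} {v : Fin k → ℝ} (hv : v ≠ 0) : ang v v = 0 := by
  rw [ang, n2_sq, div_self (fun h => hv (dotProduct_self_eq_zero.1 h)), Real.arccos_one]

lemma g_bounds {θ : ℝ} (h0 : 0 ≤ θ) (h1 : θ ≤ π) :
    0 ≤ (π - θ) * Real.cos θ + Real.sin θ ∧ (π - θ) * Real.cos θ + Real.sin θ ≤ π := by
  constructor
  · rcases le_or_gt θ (π/2) with hle | hgt
    · have hc : 0 ≤ Real.cos θ := Real.cos_nonneg_of_mem_Icc ⟨by linarith [Real.pi_pos], hle⟩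
      have hs : 0 ≤ Real.sin θ := Real.sin_nonneg_of_nonneg_of_le_pi h0 h1
      nlinarith
    · set φ := π - θ with hφ
      have hφ0 : 0 ≤ φ := by simp [hφ]; linarith
      have hφlt : φ < π/2 := by simp [hφ]; linarith
      have hcos : Real.cos θ = -Real.cos φ := by
        rw [hφ, Real.cos_pi_sub, neg_neg]
      have hsin : Real.sin θ = Real.sin φ := by rw [hφ, Real.sin_pi_sub]
      have key : φ * Real.cos φ ≤ Real.sin φ := by
        rcases eq_or_lt_of_le hφ0 with heq | hlt
        · simp [← heq]
        · have ht := Real.lt_tan hlt hφlt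
          have hcp : 0 < Real.cos φ := Real.cos_pos_of_mem_Ioo ⟨by linarith [Real.pi_pos], hφlt⟩
          rw [Real.tan_eq_sin_div_cos, lt_div_iff₀ hcp] at ht
          linarith
      rw [hcos, hsin]; nlinarith
  · have hc : Real.cos θ ≤ 1 := Real.cos_le_one θ
    have hs : Real.sin θ ≤ θ := Real.sin_le h0
    nlinarith

lemma key_arith {ε c' e1 t w : ℝ} (hε0 : 0 < ε) (hε : ε < 0.1)
    (hc0 : 0 ≤ c') (hc1 : c' ≤ 1/2) (he1 : |e1| ≤ ε)
    (ht : |t - 1/2| ≤ ε) (hw : |w - 1/2| ≤ ε) :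
    |(c' + e1) / (Real.sqrt t * Real.sqrt w) - 2 * c'| ≤ 5 * ε := by
  have ht' := abs_le.1 ht
  have hw' := abs_le.1 hw
  have he1' := abs_le.1 he1
  have hlb : (0:ℝ) < 1/2 - ε := by norm_num at hε ⊢; linarith
  have hslb : 1/2 - ε ≤ Real.sqrt t * Real.sqrt w := by
    have h1 : Real.sqrt (1/2 - ε) ≤ Real.sqrt t := Real.sqrt_le_sqrt (by linarith)
    have h2 : Real.sqrt (1/2 - ε) ≤ Real.sqrt w := Real.sqrt_le_sqrt (by linarith)
    calc 1/2 - ε = Real.sqrt (1/2 - ε) * Real.sqrt (1/2 - ε) :=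
          (Real.mul_self_sqrt hlb.le).symm
      _ ≤ Real.sqrt t * Real.sqrt w :=
          mul_le_mul h1 h2 (Real.sqrt_nonneg _) (Real.sqrt_nonneg _)
  have hsub : Real.sqrt t * Real.sqrt w ≤ 1/2 + ε := by
    have h1 : Real.sqrt t ≤ Real.sqrt (1/2 + ε) := Real.sqrt_le_sqrt (by linarith)
    have h2 : Real.sqrt w ≤ Real.sqrt (1/2 + ε) := Real.sqrt_le_sqrt (by linarith)
    calc Real.sqrt t * Real.sqrt w ≤ Real.sqrt (1/2 + ε) * Real.sqrt (1/2 + ε) :=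
          mul_le_mul h1 h2 (Real.sqrt_nonneg _) (Real.sqrt_nonneg _)
      _ = 1/2 + ε := Real.mul_self_sqrt (by linarith)
  set s := Real.sqrt t * Real.sqrt w with hs
  have hspos : 0 < s := lt_of_lt_of_le hlb hslb
  have heq : (c' + e1) / s - 2 * c' = (c' + e1 - 2 * c' * s) / s := by
    field_simp
  rw [heq, abs_div, abs_of_pos hspos, div_le_iff₀ hspos]
  have hnum : |c' + e1 - 2 * c' * s| ≤ 2 * ε := by
    rw [abs_le]
    constructor <;> nlinarith
  have : 2 * ε ≤ 5 * ε * s := by nlinarith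
  linarith

lemma dp_transpose_mul {n k : ℕ} (A B : Matrix (Fin n) (Fin k) ℝ) (x y : Fin k → ℝ) :
    x ⬝ᵥ ((Aᵀ * B) *ᵥ y) = (A *ᵥ x) ⬝ᵥ (B *ᵥ y) := by
  rw [← Matrix.mulVec_mulVec, Matrix.dotProduct_mulVec x Aᵀ, Matrix.vecMul_transpose]

lemma dp_decomp {k : ℕ} (P M : Matrix (Fin k) (Fin k) ℝ) (c₁ c₂ : ℝ) (x y : Fin k → ℝ) :
    x ⬝ᵥ (P *ᵥ y) = x ⬝ᵥ ((P - c₁ • 1 - c₂ • M) *ᵥ y) + c₁ * (x ⬝ᵥ y)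
      + c₂ * (x ⬝ᵥ (M *ᵥ y)) := by
  rw [Matrix.sub_mulVec, Matrix.sub_mulVec, Matrix.smul_mulVec,
    Matrix.smul_mulVec, Matrix.one_mulVec, dotProduct_sub,
    dotProduct_sub, dotProduct_smul, dotProduct_smul,
    smul_eq_mul, smul_eq_mul]
  ring

theorem wdc_cos_angle_bound {n k : ℕ} (W : Matrix (Fin n) (Fin k) ℝ) (ε : ℝ)
    (hε0 : 0 < ε) (hε : ε < 0.1) (hW : WDC W ε)
    (x y : Fin k → ℝ) (hx : x ≠ 0) (hy : y ≠ 0) :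
    (Wplus W x).mulVec x ≠ 0 ∧ (Wplus W y).mulVec y ≠ 0 ∧
    |Real.cos (ang ((Wplus W x).mulVec x) ((Wplus W y).mulVec y))
        - ((π - ang x y) * Real.cos (ang x y) + Real.sin (ang x y)) / π| ≤ 5 * ε := by
  have hπ := Real.pi_pos
  have hnx := n2_pos hx
  have hny := n2_pos hy
  have hxx : (0:ℝ) < x ⬝ᵥ x := by rw [← n2_sq]; positivity
  have hyy : (0:ℝ) < y ⬝ᵥ y := by rw [← n2_sq]; positivity
  obtain ⟨Mxy, -, -, hMxy2, -, hspecxy⟩ := hW x y hx hy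
  obtain ⟨Mx, -, -, -, -, hspecx⟩ := hW x x hx hx
  obtain ⟨My, -, -, -, -, hspecy⟩ := hW y y hy hy
  set A := Wplus W x
  set B := Wplus W y
  set θ := ang x y with hθdef
  have hθ0 : 0 ≤ θ := Real.arccos_nonneg _
  have hθπ : θ ≤ π := Real.arccos_le_pi _
  -- the x-self estimate
  set Dx := Aᵀ * A - ((π - ang x x) / (2 * π)) • (1 : Matrix (Fin k) (Fin k) ℝ)
      - (Real.sin (ang x x) / (2 * π)) • Mx with hDxdef
  set Dy := Bᵀ * B - ((π - ang y y) / (2 * π)) • (1 : Matrix (Fin k) (Fin k) ℝ)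
      - (Real.sin (ang y y) / (2 * π)) • My with hDydef
  set Dxy := Aᵀ * B - ((π - θ) / (2 * π)) • (1 : Matrix (Fin k) (Fin k) ℝ)
      - (Real.sin θ / (2 * π)) • Mxy with hDxydef
  clear_value A B θ Dx Dy Dxy
  have hcx1 : (π - ang x x) / (2 * π) = 1/2 := by
    rw [ang_self hx, sub_zero, div_eq_iff (by positivity : (2*π) ≠ 0)]; ring
  have hcx2 : Real.sin (ang x x) / (2 * π) = 0 := by
    rw [ang_self hx, Real.sin_zero, zero_div]
  have hcy1 : (π - ang y y) / (2 * π) = 1/2 := by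
    rw [ang_self hy, sub_zero, div_eq_iff (by positivity : (2*π) ≠ 0)]; ring
  have hcy2 : Real.sin (ang y y) / (2 * π) = 0 := by
    rw [ang_self hy, Real.sin_zero, zero_div]
  have hDx' : Aᵀ * A - (1/2 : ℝ) • (1 : Matrix (Fin k) (Fin k) ℝ) - (0:ℝ) • Mx = Dx := by
    rw [hDxdef, hcx1, hcx2]
  have hDy' : Bᵀ * B - (1/2 : ℝ) • (1 : Matrix (Fin k) (Fin k) ℝ) - (0:ℝ) • My = Dy := by
    rw [hDydef, hcy1, hcy2]
  -- self dot products
  have hpu : (A *ᵥ x) ⬝ᵥ (A *ᵥ x)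
      = x ⬝ᵥ (Dx *ᵥ x) + (1/2) * (x ⬝ᵥ x) := by
    rw [← dp_transpose_mul, dp_decomp (Aᵀ * A) Mx ((π - ang x x) / (2 * π))
      (Real.sin (ang x x) / (2 * π)) x x, hcx1, hcx2, hDx']
    ring
  have hpv : (B *ᵥ y) ⬝ᵥ (B *ᵥ y)
      = y ⬝ᵥ (Dy *ᵥ y) + (1/2) * (y ⬝ᵥ y) := by
    rw [← dp_transpose_mul, dp_decomp (Bᵀ * B) My ((π - ang y y) / (2 * π))
      (Real.sin (ang y y) / (2 * π)) y y, hcy1, hcy2, hDy']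
    ring
  -- error bounds
  have hex : |x ⬝ᵥ (Dx *ᵥ x)| ≤ ε * (x ⬝ᵥ x) := by
    calc |x ⬝ᵥ (Dx *ᵥ x)| ≤ spec Dx * (n2 x * n2 x) := spec_bound Dx x x
      _ ≤ ε * (n2 x * n2 x) := mul_le_mul_of_nonneg_right hspecx (by positivity)
      _ = ε * (x ⬝ᵥ x) := by rw [n2_sq]
  have hey : |y ⬝ᵥ (Dy *ᵥ y)| ≤ ε * (y ⬝ᵥ y) := by
    calc |y ⬝ᵥ (Dy *ᵥ y)| ≤ spec Dy * (n2 y * n2 y) := spec_bound Dy y y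
      _ ≤ ε * (n2 y * n2 y) := mul_le_mul_of_nonneg_right hspecy (by positivity)
      _ = ε * (y ⬝ᵥ y) := by rw [n2_sq]
  have hexy : |x ⬝ᵥ (Dxy *ᵥ y)| ≤ ε * (n2 x * n2 y) := by
    calc |x ⬝ᵥ (Dxy *ᵥ y)| ≤ spec Dxy * (n2 x * n2 y) := spec_bound Dxy x y
      _ ≤ ε * (n2 x * n2 y) := mul_le_mul_of_nonneg_right hspecxy (by positivity)
  -- t, w
  obtain ⟨t, hput, ht⟩ : ∃ t : ℝ, (A *ᵥ x) ⬝ᵥ (A *ᵥ x) = (x ⬝ᵥ x) * t ∧ |t - 1/2| ≤ ε := by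
    refine ⟨(x ⬝ᵥ (Dx *ᵥ x)) / (x ⬝ᵥ x) + 1/2, ?_, ?_⟩
    · rw [hpu]; field_simp
    · rw [add_sub_cancel_right, abs_div, abs_of_pos hxx, div_le_iff₀ hxx]; exact hex
  obtain ⟨w, hpvw, hw⟩ : ∃ w : ℝ, (B *ᵥ y) ⬝ᵥ (B *ᵥ y) = (y ⬝ᵥ y) * w ∧ |w - 1/2| ≤ ε := by
    refine ⟨(y ⬝ᵥ (Dy *ᵥ y)) / (y ⬝ᵥ y) + 1/2, ?_, ?_⟩
    · rw [hpv]; field_simp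
    · rw [add_sub_cancel_right, abs_div, abs_of_pos hyy, div_le_iff₀ hyy]; exact hey
  have hε' : ε < 1/10 := by norm_num at hε; exact hε
  have htpos : 0 < t := by
    have h1 := (abs_le.1 ht).1
    nlinarith [h1]
  have hwpos : 0 < w := by
    have h1 := (abs_le.1 hw).1
    nlinarith [h1]
  -- nonvanishing
  have hu0 : A *ᵥ x ≠ 0 := by
    intro h
    have : (A *ᵥ x) ⬝ᵥ (A *ᵥ x) = 0 := by rw [h]; simp
    rw [hput] at this
    exact (ne_of_gt (mul_pos hxx htpos)) this
  have hv0 : B *ᵥ y ≠ 0 := by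
    intro h
    have : (B *ᵥ y) ⬝ᵥ (B *ᵥ y) = 0 := by rw [h]; simp
    rw [hpvw] at this
    exact (ne_of_gt (mul_pos hyy hwpos)) this
  refine ⟨hu0, hv0, ?_⟩
  -- cross term ingredients
  have hxy : x ⬝ᵥ y = Real.cos θ * (n2 x * n2 y) := by
    have := cos_ang hx hy
    rw [← hθdef] at this
    rw [this]; field_simp
  have hMy : x ⬝ᵥ (Mxy *ᵥ y) = n2 x * n2 y := by
    have h5 : (n2 y)⁻¹ • (Mxy *ᵥ y) = (n2 x)⁻¹ • x := by
      rw [← Matrix.mulVec_smul]; exact hMxy2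
    have h6 := congrArg (fun v => x ⬝ᵥ v) h5
    simp only [dotProduct_smul, smul_eq_mul] at h6
    rw [← n2_sq x] at h6
    rw [inv_mul_eq_div, inv_mul_eq_div, div_eq_div_iff hny.ne' hnx.ne'] at h6
    apply mul_right_cancel₀ hnx.ne'
    rw [h6]; ring
  set c' : ℝ := ((π - θ) / (2 * π)) * Real.cos θ + Real.sin θ / (2 * π) with hc'def
  clear_value c'
  obtain ⟨e1, huv, he1⟩ : ∃ e1 : ℝ, (A *ᵥ x) ⬝ᵥ (B *ᵥ y) = (n2 x * n2 y) * (c' + e1)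
      ∧ |e1| ≤ ε := by
    refine ⟨(x ⬝ᵥ (Dxy *ᵥ y)) / (n2 x * n2 y), ?_, ?_⟩
    · rw [← dp_transpose_mul, dp_decomp (Aᵀ * B) Mxy ((π - θ) / (2 * π))
        (Real.sin θ / (2 * π)) x y, ← hDxydef, hxy, hMy, hc'def, mul_add,
        mul_div_cancel₀ _ (ne_of_gt (mul_pos hnx hny))]
      ring
    · rw [abs_div, abs_of_pos (by positivity : (0:ℝ) < n2 x * n2 y),
        div_le_iff₀ (by positivity : (0:ℝ) < n2 x * n2 y)]
      exact hexy
  -- c' bounds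
  have hg := g_bounds hθ0 hθπ
  have hc0 : 0 ≤ c' := by
    rw [hc'def]
    have : ((π - θ) / (2 * π)) * Real.cos θ + Real.sin θ / (2 * π)
        = ((π - θ) * Real.cos θ + Real.sin θ) / (2 * π) := by ring
    rw [this]
    exact div_nonneg hg.1 (by positivity)
  have hc1 : c' ≤ 1/2 := by
    rw [hc'def]
    rw [show ((π - θ) / (2 * π)) * Real.cos θ + Real.sin θ / (2 * π)
        = ((π - θ) * Real.cos θ + Real.sin θ) / (2 * π) from by ring]
    rw [div_le_iff₀ (by positivity : (0:ℝ) < 2 * π)]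
    linarith [hg.2]
  -- cosine of the new angle
  have hn2u : n2 (A *ᵥ x) = n2 x * Real.sqrt t := by
    rw [n2, hput, Real.sqrt_mul hxx.le]; rfl
  have hn2v : n2 (B *ᵥ y) = n2 y * Real.sqrt w := by
    rw [n2, hpvw, Real.sqrt_mul hyy.le]; rfl
  have hcosuv : Real.cos (ang (A *ᵥ x) (B *ᵥ y))
      = (c' + e1) / (Real.sqrt t * Real.sqrt w) := by
    rw [cos_ang hu0 hv0, huv, hn2u, hn2v,
      show (n2 x * Real.sqrt t) * (n2 y * Real.sqrt w)
        = (n2 x * n2 y) * (Real.sqrt t * Real.sqrt w) from by ring,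
      mul_div_mul_left _ _ (ne_of_gt (mul_pos hnx hny))]
  have htarget : ((π - θ) * Real.cos θ + Real.sin θ) / π = 2 * c' := by
    rw [hc'def]
    field_simp
  rw [hcosuv, htarget]
  exact key_arith hε0 hε hc0 hc1 he1 ht hw
end

section
/- Let W ∈ ℝ^{n×ℓ} be a matrix such that every ℓ of its rows are linearly independent (n ≥ ℓ ≥ 1). Then the number of distinct matrices diag(Wv > 0)·W over v ∈ ℝ^ℓ \ {0} is at most 2 Σ_{i=0}^{ℓ−1} C(n−1, i). -/
open Matrix

open Module Finset

lemma aux_surj {V : Type} [AddCommGroup V] [Module ℝ V] [FiniteDimensional ℝ V]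
    {ι : Type} [Fintype ι] [DecidableEq ι] (φ : ι → (V →ₗ[ℝ] ℝ))
    (h : ∀ g : ι → ℝ, ∑ i, g i • φ i = 0 → g = 0) :
    Function.Surjective (LinearMap.pi φ) := by
  rw [← LinearMap.range_eq_top]
  by_contra hr
  obtain ⟨f, hf0, hfb⟩ := Submodule.exists_dual_map_eq_bot_of_lt_top
    (lt_top_iff_ne_top.2 hr) inferInstance
  set g : ι → ℝ := fun i => f (fun j => if i = j then 1 else 0) with hg
  have hsum : ∑ i, g i • φ i = 0 := by
    ext v
    have hv : f (LinearMap.pi φ v) = 0 := by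
      have : f (LinearMap.pi φ v) ∈ Submodule.map f (LinearMap.range (LinearMap.pi φ)) :=
        Submodule.mem_map_of_mem (LinearMap.mem_range_self _ v)
      rw [hfb] at this
      simpa using this
    rw [LinearMap.pi_apply_eq_sum_univ f (LinearMap.pi φ v)] at hv
    simpa [LinearMap.pi_apply, mul_comm] using hv
  have := h g hsum
  apply hf0
  refine LinearMap.ext fun x => ?_
  rw [LinearMap.pi_apply_eq_sum_univ f x]
  simp only [hg] at this
  simp [congrFun this]

lemma key_surj {V : Type} [AddCommGroup V] [Module ℝ V] [FiniteDimensional ℝ V]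
    {k : ℕ} (φ : Fin k → (V →ₗ[ℝ] ℝ))
    (hgen : ∀ g : Fin k → ℝ, ∑ i, g i • φ i = 0 →
      (univ.filter fun i => g i ≠ 0).card ≤ finrank ℝ V → g = 0)
    (T : Finset (Fin k)) (hT : T.card ≤ finrank ℝ V) :
    Function.Surjective (LinearMap.pi (fun i : T => φ i)) := by
  classical
  apply aux_surj
  intro g hgsum
  set G : Fin k → ℝ := fun j => if h : j ∈ T then g ⟨j, h⟩ else 0 with hG
  have hsum : ∑ j, G j • φ j = 0 := by
    calc ∑ j, G j • φ j = ∑ j ∈ T, G j • φ j :=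
          (Finset.sum_subset (subset_univ T) (fun x _ hx => by simp [hG, hx])).symm
      _ = ∑ i ∈ T.attach, G i • φ i := (Finset.sum_attach T _).symm
      _ = ∑ i : T, g i • φ i := by
          refine Finset.sum_congr rfl fun i _ => ?_
          simp [hG]
      _ = 0 := hgsum
  have hsupp : (univ.filter fun j => G j ≠ 0) ⊆ T := by
    intro j hj
    simp only [mem_filter] at hj
    by_contra hjT
    exact hj.2 (by simp [hG, hjT])
  have hzero := hgen G hsum (le_trans (Finset.card_le_card hsupp) hT)
  funext i
  have := congrFun hzero (i : Fin k)
  simpa [hG, i.2] using this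

lemma perturb {V : Type} [AddCommGroup V] [Module ℝ V] [FiniteDimensional ℝ V]
    {k : ℕ} (φ : Fin k → (V →ₗ[ℝ] ℝ))
    (hgen : ∀ g : Fin k → ℝ, ∑ i, g i • φ i = 0 →
      (univ.filter fun i => g i ≠ 0).card ≤ finrank ℝ V → g = 0)
    (v : V) (hv : v ≠ 0) :
    ∃ v' : V, ∀ i, (0 < φ i v ↔ 0 < φ i v') ∧ φ i v' ≠ 0 := by
  classical
  set Z : Finset (Fin k) := univ.filter (fun i => φ i v = 0) with hZ
  have hZcard : Z.card < finrank ℝ V := by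
    by_contra hcon
    push_neg at hcon
    obtain ⟨T, hTZ, hTcard⟩ := Finset.exists_subset_card_eq hcon
    have hsurj := key_surj φ hgen T hTcard.le
    have hker : LinearMap.ker (LinearMap.pi (fun i : T => φ i)) = ⊥ := by
      have h1 := LinearMap.finrank_range_add_finrank_ker (LinearMap.pi (fun i : T => φ i))
      rw [LinearMap.range_eq_top.2 hsurj] at h1
      have h2 : finrank ℝ (⊤ : Submodule ℝ (T → ℝ)) = T.card := by
        rw [finrank_top, Module.finrank_pi, Fintype.card_coe]
      rw [h2, hTcard] at h1
      have : finrank ℝ (LinearMap.ker (LinearMap.pi (fun i : T => φ i))) = 0 := by omega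
      exact Submodule.finrank_eq_zero.mp this
    apply hv
    have hmem : v ∈ LinearMap.ker (LinearMap.pi (fun i : T => φ i)) := by
      rw [LinearMap.mem_ker]
      funext i
      have : (i : Fin k) ∈ Z := hTZ i.2
      simp only [hZ, mem_filter] at this
      simpa using this.2
    rwa [hker, Submodule.mem_bot] at hmem
  obtain ⟨z, hz⟩ := key_surj φ hgen Z hZcard.le (fun _ => (-1 : ℝ))
  have hzZ : ∀ i (h : i ∈ Z), φ i z = -1 := fun i h => congrFun hz ⟨i, h⟩
  set T : Finset (Fin k) := univ.filter (fun i => φ i v ≠ 0) with hT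
  by_cases hTne : T.Nonempty
  · set ε : ℝ := T.inf' hTne (fun i => |φ i v| / (|φ i z| + 1)) with hε
    have hεpos : 0 < ε := by
      rw [hε, Finset.lt_inf'_iff]
      intro i hi
      simp only [hT, mem_filter] at hi
      exact div_pos (abs_pos.2 hi.2) (by positivity)
    refine ⟨v + ε • z, fun i => ?_⟩
    have happ : φ i (v + ε • z) = φ i v + ε * φ i z := by
      simp [map_add, _root_.map_smul, smul_eq_mul]
    by_cases hi : φ i v = 0
    · have hiZ : i ∈ Z := by simp [hZ, hi]
      rw [happ, hi, hzZ i hiZ]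
      constructor
      · constructor <;> intro h <;> [exact absurd h (lt_irrefl 0); linarith]
      · intro h; nlinarith
    · have hiT : i ∈ T := by simp [hT, hi]
      have hle : ε ≤ |φ i v| / (|φ i z| + 1) := Finset.inf'_le _ hiT
      have habs : |ε * φ i z| < |φ i v| := by
        rw [abs_mul, abs_of_pos hεpos]
        have h1 : 0 < |φ i v| := abs_pos.2 hi
        have h2 : 0 ≤ |φ i z| := abs_nonneg _
        calc ε * |φ i z| ≤ (|φ i v| / (|φ i z| + 1)) * |φ i z| := by
              apply mul_le_mul_of_nonneg_right hle h2
          _ < |φ i v| := by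
              rw [div_mul_eq_mul_div, div_lt_iff₀ (by positivity)]
              nlinarith
      have hpair := abs_lt.mp habs
      rcases lt_or_gt_of_ne hi with hneg | hpos
      · have hv' : φ i (v + ε • z) < 0 := by
          rw [happ]
          have : |φ i v| = -(φ i v) := abs_of_neg hneg
          rw [this] at hpair
          linarith [hpair.2]
        exact ⟨⟨fun h => absurd h (not_lt.2 hneg.le), fun h => absurd h (not_lt.2 hv'.le)⟩,
          ne_of_lt hv'⟩
      · have hv' : 0 < φ i (v + ε • z) := by
          rw [happ]
          have : |φ i v| = φ i v := abs_of_pos hpos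
          rw [this] at hpair
          linarith [hpair.1]
        exact ⟨⟨fun _ => hv', fun _ => hpos⟩, (ne_of_lt hv').symm⟩
  · refine ⟨z, fun i => ?_⟩
    have hiZ : i ∈ Z := by
      simp only [hZ, mem_filter, mem_univ, true_and]
      by_contra hne
      exact hTne ⟨i, by simp [hT, hne]⟩
    have h0 : φ i v = 0 := by simpa [hZ] using hiZ
    rw [h0, hzZ i hiZ]
    norm_num

lemma pascal_sum (p d : ℕ) :
    ∑ i ∈ Finset.range d, (p+1).choose i
      = ∑ i ∈ Finset.range d, p.choose i + ∑ i ∈ Finset.range (d-1), p.choose i := by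
  cases d with
  | zero => simp
  | succ e =>
    rw [Finset.sum_range_succ' (fun i => (p+1).choose i) e,
        Finset.sum_range_succ' (fun i => p.choose i) e]
    simp only [Nat.choose_succ_succ, Nat.choose_zero_right, Nat.add_sub_cancel]
    rw [Finset.sum_add_distrib]
    ring

set_option maxHeartbeats 2000000 in
lemma main_count : ∀ (k : ℕ) (V : Type) [AddCommGroup V] [Module ℝ V]
    [FiniteDimensional ℝ V] (φ : Fin k → (V →ₗ[ℝ] ℝ)), 1 ≤ k →
    (∀ g : Fin k → ℝ, ∑ i, g i • φ i = 0 →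
      (univ.filter fun i => g i ≠ 0).card ≤ finrank ℝ V → g = 0) →
    ∀ A : Finset (Fin k → Bool),
      (∀ s ∈ A, ∃ v : V, ∀ i, if s i then 0 < φ i v else φ i v < 0) →
      A.card ≤ 2 * ∑ i ∈ Finset.range (finrank ℝ V), (k-1).choose i := by
  intro k
  induction k using Nat.strong_induction_on with
  | _ k IH =>
  intro V _ _ _ φ hk hgen A hA
  classical
  by_cases hD0 : finrank ℝ V = 0
  · have hsub : Subsingleton V := finrank_zero_iff.mp hD0
    have : A = ∅ := by
      rw [Finset.eq_empty_iff_forall_notMem]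
      intro s hs
      obtain ⟨v, hv⟩ := hA s hs
      have hv0 : v = 0 := Subsingleton.elim v 0
      have := hv ⟨0, hk⟩
      rw [hv0] at this
      by_cases h : s ⟨0, hk⟩ <;> simp [h] at this
    simp [this]
  · have hD1 : 1 ≤ finrank ℝ V := Nat.one_le_iff_ne_zero.2 hD0
    obtain ⟨m, rfl⟩ : ∃ m, k = m + 1 := ⟨k - 1, (Nat.succ_pred_eq_of_pos hk).symm⟩
    by_cases hm : m = 0
    · subst hm
      have h2 : A.card ≤ 2 := by
        calc A.card ≤ Fintype.card (Fin 1 → Bool) := Finset.card_le_univ A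
          _ = 2 := by simp
      have h1 : 1 ≤ ∑ i ∈ Finset.range (finrank ℝ V), (0+1-1).choose i := by
        calc (1:ℕ) = Nat.choose 0 0 := rfl
          _ ≤ ∑ i ∈ Finset.range (finrank ℝ V), (0).choose i :=
            Finset.single_le_sum (fun i _ => Nat.zero_le _) (Finset.mem_range.2 hD1)
          _ = _ := by norm_num
      omega
    · have hm1 : 1 ≤ m := Nat.one_le_iff_ne_zero.2 hm
      set D := finrank ℝ V with hD
      set r : (Fin (m+1) → Bool) → (Fin m → Bool) := fun s => s ∘ Fin.castSucc with hr
      set φL := φ (Fin.last m) with hφL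
      set K := LinearMap.ker φL with hK
      set ψ : Fin m → (K →ₗ[ℝ] ℝ) := fun i => (φ i.castSucc).domRestrict K with hψ
      set A1 := A.image r with hA1
      set A2 := A1.filter (fun t => Fin.snoc t true ∈ A ∧ Fin.snoc t false ∈ A) with hA2
      -- Step 1 : card bound
      have step1 : A.card ≤ A1.card + A2.card := by
        have hmap : ∀ s ∈ A, r s ∈ A1 := fun s hs => Finset.mem_image_of_mem r hs
        rw [Finset.card_eq_sum_card_fiberwise hmap]
        have hfib : ∀ t ∈ A1, (A.filter (fun s => r s = t)).card
            ≤ 1 + (if Fin.snoc t true ∈ A ∧ Fin.snoc t false ∈ A then 1 else 0) := by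
          intro t _
          have hsnoc : ∀ s, r s = t → s = Fin.snoc t (s (Fin.last m)) := by
            intro s hs
            subst hs
            exact (Fin.snoc_init_self s).symm
          split_ifs with hb
          · have : A.filter (fun s => r s = t) ⊆ {Fin.snoc t true, Fin.snoc t false} := by
              intro s hs
              rw [Finset.mem_filter] at hs
              rw [Finset.mem_insert, Finset.mem_singleton, hsnoc s hs.2]
              rcases Bool.eq_false_or_eq_true (s (Fin.last m)) with h | h <;> rw [h] <;> simp
            calc (A.filter (fun s => r s = t)).card ≤ _ := Finset.card_le_card this
              _ ≤ 2 := Finset.card_insert_le _ _ |>.trans (by simp)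
          · rw [not_and_or] at hb
            have hone : ∃ a, A.filter (fun s => r s = t) ⊆ {a} := by
              rcases hb with hb | hb
              · refine ⟨Fin.snoc t false, fun s hs => ?_⟩
                rw [Finset.mem_filter] at hs
                rw [Finset.mem_singleton, hsnoc s hs.2]
                rcases Bool.eq_false_or_eq_true (s (Fin.last m)) with h | h
                · exfalso; apply hb; rw [hsnoc s hs.2, h] at hs; exact hs.1
                · rw [h]
              · refine ⟨Fin.snoc t true, fun s hs => ?_⟩
                rw [Finset.mem_filter] at hs
                rw [Finset.mem_singleton, hsnoc s hs.2]
                rcases Bool.eq_false_or_eq_true (s (Fin.last m)) with h | h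
                · rw [h]
                · exfalso; apply hb; rw [hsnoc s hs.2, h] at hs; exact hs.1
            obtain ⟨a, ha⟩ := hone
            calc (A.filter (fun s => r s = t)).card ≤ ({a} : Finset _).card :=
                Finset.card_le_card ha
              _ = 1 := Finset.card_singleton a
        calc ∑ t ∈ A1, (A.filter (fun s => r s = t)).card
            ≤ ∑ t ∈ A1, (1 + (if Fin.snoc t true ∈ A ∧ Fin.snoc t false ∈ A then 1 else 0)) :=
              Finset.sum_le_sum hfib
          _ = A1.card + A2.card := by
              rw [Finset.sum_add_distrib]
              congr 1
              · simp
              · rw [Finset.card_filter]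
      -- φL ≠ 0
      have hφLne : φL ≠ 0 := by
        intro h0
        set G : Fin (m+1) → ℝ := Pi.single (Fin.last m) 1 with hG
        have hGsum : ∑ j, G j • φ j = 0 := by
          rw [Finset.sum_eq_single (Fin.last m)]
          · rw [hG, Pi.single_eq_same, one_smul, ← hφL, h0]
          · intro j _ hj
            simp [hG, Pi.single_eq_of_ne hj]
          · simp
        have hGcard : (univ.filter fun j => G j ≠ 0).card ≤ D := by
          have hsub : (univ.filter fun j => G j ≠ 0) ⊆ {Fin.last m} := by
            intro j hj
            rw [Finset.mem_filter] at hj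
            rw [Finset.mem_singleton]
            by_contra hne
            exact hj.2 (Pi.single_eq_of_ne hne 1)
          calc _ ≤ ({Fin.last m} : Finset _).card := Finset.card_le_card hsub
            _ = 1 := rfl
            _ ≤ D := hD1
        have := hgen G hGsum hGcard
        have h1 := congrFun this (Fin.last m)
        simp [hG] at h1
      -- finrank K = D - 1
      have hKrank : finrank ℝ K = D - 1 := by
        obtain ⟨u, hu⟩ : ∃ u, φL u ≠ 0 := by
          by_contra hcon
          push_neg at hcon
          exact hφLne (LinearMap.ext fun x => by simp [hcon])
        have hsurj : Function.Surjective φL := by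
          intro c
          exact ⟨(c * (φL u)⁻¹) • u, by rw [_root_.map_smul, smul_eq_mul]; field_simp⟩
        have h1 := LinearMap.finrank_range_add_finrank_ker φL
        rw [LinearMap.range_eq_top.2 hsurj, finrank_top, finrank_self] at h1
        rw [← hK] at h1
        omega
      -- Step 2 : A1 bound
      have step2 : A1.card ≤ 2 * ∑ i ∈ Finset.range D, (m-1).choose i := by
        have hgen' : ∀ g : Fin m → ℝ, ∑ i, g i • φ (Fin.castSucc i) = 0 →
            (univ.filter fun i => g i ≠ 0).card ≤ D → g = 0 := by
          intro g hs hc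
          set G : Fin (m+1) → ℝ := Fin.snoc g 0 with hG
          have hGsum : ∑ j, G j • φ j = 0 := by
            rw [Fin.sum_univ_castSucc]
            have h1 : ∀ i : Fin m, G (Fin.castSucc i) • φ (Fin.castSucc i)
                = g i • φ (Fin.castSucc i) := fun i => by rw [hG, Fin.snoc_castSucc]
            have h2 : G (Fin.last m) = 0 := by rw [hG, Fin.snoc_last]
            rw [h2]
            simp only [h1, zero_smul, add_zero]
            exact hs
          have hGsupp : (univ.filter fun j => G j ≠ 0)
              = (univ.filter fun i => g i ≠ 0).image Fin.castSucc := by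
            ext j
            simp only [mem_filter, mem_univ, true_and, mem_image]
            constructor
            · intro hj
              rcases Fin.eq_castSucc_or_eq_last j with ⟨i, rfl⟩ | rfl
              · exact ⟨i, by simpa [hG, Fin.snoc_castSucc] using hj, rfl⟩
              · exact absurd (by rw [hG]; exact Fin.snoc_last _ _) hj
            · rintro ⟨i, hi, rfl⟩
              simpa [hG, Fin.snoc_castSucc] using hi
          have hG0 := hgen G hGsum (by
            rw [hGsupp, Finset.card_image_of_injective _ (Fin.castSucc_injective m)]
            exact hc)
          funext i
          have := congrFun hG0 (Fin.castSucc i)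
          simpa [hG, Fin.snoc_castSucc] using this
        have := IH m (by omega) V (fun i => φ (Fin.castSucc i)) hm1 hgen' A1 (by
          intro t ht
          rw [hA1, Finset.mem_image] at ht
          obtain ⟨s, hsA, rfl⟩ := ht
          obtain ⟨v, hv⟩ := hA s hsA
          exact ⟨v, fun i => hv (Fin.castSucc i)⟩)
        exact this
      -- Step 3 : A2 bound
      have step3 : A2.card ≤ 2 * ∑ i ∈ Finset.range (D-1), (m-1).choose i := by
        have hgenK : ∀ g : Fin m → ℝ, ∑ i, g i • ψ i = 0 →
            (univ.filter fun i => g i ≠ 0).card ≤ finrank ℝ K → g = 0 := by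
          intro g hsum hcard
          rw [hKrank] at hcard
          obtain ⟨u, hu⟩ : ∃ u, φL u ≠ 0 := by
            by_contra hcon
            push_neg at hcon
            exact hφLne (LinearMap.ext fun x => by simp [hcon])
          set u' := (φL u)⁻¹ • u with hu'
          have hu1 : φL u' = 1 := by
            rw [hu', _root_.map_smul, smul_eq_mul]
            field_simp
          set F : V →ₗ[ℝ] ℝ := ∑ i, g i • φ (Fin.castSucc i) with hF
          have hFapp : ∀ x, F x = ∑ i, g i * φ (Fin.castSucc i) x := by
            intro x
            rw [hF]
            simp [LinearMap.sum_apply, smul_eq_mul]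
          have hFK : ∀ x, x ∈ K → F x = 0 := by
            intro x hx
            have h1 : (∑ i, g i • ψ i) ⟨x, hx⟩ = 0 := by rw [hsum]; rfl
            rw [hFapp]
            calc ∑ i, g i * φ (Fin.castSucc i) x
                = (∑ i, g i • ψ i) ⟨x, hx⟩ := by
                  simp [LinearMap.sum_apply, smul_eq_mul, hψ, LinearMap.domRestrict_apply]
              _ = 0 := h1
          set c := F u' with hc
          have hFc : ∀ x, F x = c * φL x := by
            intro x
            have hxK : x - φL x • u' ∈ K := by
              rw [hK, LinearMap.mem_ker, map_sub, _root_.map_smul, smul_eq_mul, hu1]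
              ring
            have h1 := hFK _ hxK
            rw [map_sub, _root_.map_smul, smul_eq_mul] at h1
            rw [hc]
            linarith [h1, mul_comm (φL x) (F u')]
          set G : Fin (m+1) → ℝ := Fin.snoc g (-c) with hG
          have hGsum : ∑ j, G j • φ j = 0 := by
            rw [Fin.sum_univ_castSucc]
            refine LinearMap.ext fun x => ?_
            simp only [LinearMap.add_apply, LinearMap.sum_apply, LinearMap.smul_apply,
              smul_eq_mul, LinearMap.zero_apply]
            have h1 : ∀ i : Fin m, G (Fin.castSucc i) = g i := fun i => by
              rw [hG]; exact Fin.snoc_castSucc _ _ _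
            have h2 : G (Fin.last m) = -c := by rw [hG]; exact Fin.snoc_last _ _
            have hFx := hFc x
            rw [hFapp] at hFx
            simp only [h1, h2]
            rw [← hφL]
            linarith [hFx]
          have hGcard : (univ.filter fun j => G j ≠ 0).card ≤ D := by
            have hsub : (univ.filter fun j => G j ≠ 0)
                ⊆ insert (Fin.last m) (((univ.filter fun i => g i ≠ 0)).image Fin.castSucc) := by
              intro j hj
              rw [Finset.mem_filter] at hj
              rw [Finset.mem_insert]
              rcases Fin.eq_castSucc_or_eq_last j with ⟨i, rfl⟩ | rfl
              · right
                rw [Finset.mem_image]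
                refine ⟨i, ?_, rfl⟩
                rw [Finset.mem_filter]
                refine ⟨Finset.mem_univ i, ?_⟩
                intro h0
                apply hj.2
                rw [hG, Fin.snoc_castSucc, h0]
              · left; rfl
            calc (univ.filter fun j => G j ≠ 0).card
                ≤ _ := Finset.card_le_card hsub
              _ ≤ ((univ.filter fun i => g i ≠ 0).image Fin.castSucc).card + 1 :=
                  Finset.card_insert_le _ _
              _ = (univ.filter fun i => g i ≠ 0).card + 1 := by
                  rw [Finset.card_image_of_injective _ (Fin.castSucc_injective m)]
              _ ≤ (D - 1) + 1 := by omega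
              _ = D := by omega
          have hG0 := hgen G hGsum hGcard
          funext i
          have := congrFun hG0 (Fin.castSucc i)
          simpa [hG, Fin.snoc_castSucc] using this
        have hA2real : ∀ t ∈ A2, ∃ v : K, ∀ i, if t i then 0 < ψ i v else ψ i v < 0 := by
          intro t ht
          rw [hA2, Finset.mem_filter] at ht
          obtain ⟨ht1, htt, htf⟩ := ht
          obtain ⟨v, hv⟩ := hA _ htt
          obtain ⟨w, hw⟩ := hA _ htf
          have hvL : 0 < φL v := by
            have := hv (Fin.last m)
            rwa [Fin.snoc_last, if_pos rfl] at this
          have hwL : φL w < 0 := by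
            have := hw (Fin.last m)
            rwa [Fin.snoc_last, if_neg (by simp)] at this
          have hbpos : 0 < -φL w := by linarith
          have hv0K : φL v • w + (-φL w) • v ∈ K := by
            rw [hK, LinearMap.mem_ker, map_add, _root_.map_smul, _root_.map_smul, smul_eq_mul, smul_eq_mul]
            ring
          refine ⟨⟨φL v • w + (-φL w) • v, hv0K⟩, fun i => ?_⟩
          have hψi : ψ i ⟨φL v • w + (-φL w) • v, hv0K⟩
              = φL v * φ (Fin.castSucc i) w + (-φL w) * φ (Fin.castSucc i) v := by
            show (φ (Fin.castSucc i)).domRestrict K ⟨φL v • w + (-φL w) • v, hv0K⟩ = _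
            rw [LinearMap.domRestrict_apply, map_add, _root_.map_smul, _root_.map_smul, smul_eq_mul,
              smul_eq_mul]
          have hvi := hv (Fin.castSucc i)
          have hwi := hw (Fin.castSucc i)
          rw [Fin.snoc_castSucc] at hvi hwi
          by_cases hti : t i
          · rw [if_pos hti] at hvi hwi ⊢
            rw [hψi]
            nlinarith
          · rw [if_neg hti] at hvi hwi ⊢
            rw [hψi]
            nlinarith
        have := IH m (by omega) K ψ hm1 hgenK A2 hA2real
        rwa [hKrank] at this
      -- Step 4 : arithmetic
      have harith : 2 * ∑ i ∈ Finset.range D, (m-1).choose i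
          + 2 * ∑ i ∈ Finset.range (D-1), (m-1).choose i
          = 2 * ∑ i ∈ Finset.range D, (m+1-1).choose i := by
        have hp : m - 1 + 1 = m := by omega
        have := pascal_sum (m-1) D
        rw [hp] at this
        simp only [Nat.add_sub_cancel]
        omega
      omega

theorem count_activation_patterns (n ℓ : ℕ) (hℓ : 1 ≤ ℓ) (hn : ℓ ≤ n)
    (W : Matrix (Fin n) (Fin ℓ) ℝ)
    (hW : ∀ s : Finset (Fin n), s.card = ℓ →
      LinearIndependent ℝ (fun i : s => W i)) :
    ({M | ∃ v : Fin ℓ → ℝ, v ≠ 0 ∧ M = Wplus W v} : Set (Matrix (Fin n) (Fin ℓ) ℝ)).Finite ∧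
    ({M | ∃ v : Fin ℓ → ℝ, v ≠ 0 ∧ M = Wplus W v} : Set (Matrix (Fin n) (Fin ℓ) ℝ)).ncard
      ≤ 2 * ∑ i ∈ Finset.range ℓ, (n - 1).choose i := by
  classical
  set φ : Fin n → ((Fin ℓ → ℝ) →ₗ[ℝ] ℝ) :=
    fun i => (LinearMap.proj i).comp W.mulVecLin with hφ
  have hφapp : ∀ i v, φ i v = W.mulVec v i := fun i v => rfl
  have hfr : finrank ℝ (Fin ℓ → ℝ) = ℓ := Module.finrank_fin_fun ℝ
  -- general position in combination form
  have hgenc : ∀ g : Fin n → ℝ, ∑ i, g i • φ i = 0 →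
      (univ.filter fun i => g i ≠ 0).card ≤ finrank ℝ (Fin ℓ → ℝ) → g = 0 := by
    intro g hsum hcard
    rw [hfr] at hcard
    have hrow : ∑ i, g i • W i = 0 := by
      funext j
      have h1 : (∑ i, g i • φ i) (Pi.single j 1) = 0 := by rw [hsum]; rfl
      rw [LinearMap.sum_apply] at h1
      simp only [LinearMap.smul_apply, smul_eq_mul] at h1
      have h2 : ∀ i, φ i (Pi.single j 1) = W i j := by
        intro i
        rw [hφapp, Matrix.mulVec_single]
        simp
      simp only [h2] at h1
      simpa [Finset.sum_apply] using h1
    obtain ⟨s, hsup, hscard⟩ := Finset.exists_superset_card_eq (n := ℓ) hcard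
      (by simp [hn])
    have hind := hW s hscard
    rw [Fintype.linearIndependent_iff] at hind
    have hz := hind (fun i => g i) (by
      have e1 : ∑ i : s, g (↑i) • W (↑i) = ∑ i ∈ s, g i • W i := Finset.sum_coe_sort s (fun i => g i • W i)
      have e2 : ∑ i ∈ s, g i • W i = ∑ i, g i • W i := by
        apply Finset.sum_subset (Finset.subset_univ s)
        intro x _ hx
        have : g x = 0 := by
          by_contra hgx
          exact hx (hsup (by simp [hgx]))
        simp [this]
      rw [e1, e2, hrow])
    funext i
    show g i = (0 : Fin n → ℝ) i
    rw [Pi.zero_apply]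
    by_cases hi : i ∈ s
    · exact hz ⟨i, hi⟩
    · by_contra hgx
      exact hi (hsup (by simp [hgx]))
  -- pattern set and matrix map
  set P : Set (Fin n → Bool) :=
    {s | ∃ v : Fin ℓ → ℝ, ∀ i, if s i then 0 < φ i v else φ i v < 0} with hP
  set F : (Fin n → Bool) → Matrix (Fin n) (Fin ℓ) ℝ :=
    fun s => Matrix.of fun i j => if s i then W i j else 0 with hF
  have hSP : ({M | ∃ v : Fin ℓ → ℝ, v ≠ 0 ∧ M = Wplus W v} :
      Set (Matrix (Fin n) (Fin ℓ) ℝ)) ⊆ F '' P := by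
    rintro M ⟨v, hv, rfl⟩
    obtain ⟨v', hv'⟩ := perturb φ hgenc v hv
    refine ⟨fun i => decide (0 < φ i v), ⟨v', fun i => ?_⟩, ?_⟩
    · by_cases h : 0 < φ i v
      · rw [if_pos (by simpa using h)]
        exact ((hv' i).1).mp h
      · rw [if_neg (by simpa using h)]
        have h1 : ¬ (0 < φ i v') := fun hc => h (((hv' i).1).mpr hc)
        have h2 := (hv' i).2
        rcases lt_or_gt_of_ne h2 with hlt | hgt
        · exact hlt
        · exact absurd hgt h1
    · apply Matrix.ext
      intro i j
      by_cases h : 0 < W.mulVec v i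
      · have h' : 0 < φ i v := by rw [hφapp]; exact h
        simp [hF, Wplus, h, h']
      · have h' : ¬ (0 < φ i v) := by rw [hφapp]; exact h
        simp [hF, Wplus, h, h']
  have hPfin : P.Finite := Set.toFinite P
  have hfin : ({M | ∃ v : Fin ℓ → ℝ, v ≠ 0 ∧ M = Wplus W v} :
      Set (Matrix (Fin n) (Fin ℓ) ℝ)).Finite :=
    Set.Finite.subset (hPfin.image F) hSP
  refine ⟨hfin, ?_⟩
  have h1 : ({M | ∃ v : Fin ℓ → ℝ, v ≠ 0 ∧ M = Wplus W v} :
      Set (Matrix (Fin n) (Fin ℓ) ℝ)).ncard ≤ (F '' P).ncard :=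
    Set.ncard_le_ncard hSP (hPfin.image F)
  have h2 : (F '' P).ncard ≤ P.ncard := Set.ncard_image_le hPfin
  have h3 : P.ncard ≤ 2 * ∑ i ∈ Finset.range ℓ, (n - 1).choose i := by
    have hAcard := main_count n (Fin ℓ → ℝ) φ (le_trans hℓ hn) hgenc hPfin.toFinset (by
      intro s hs
      rw [Set.Finite.mem_toFinset] at hs
      exact hs)
    rw [hfr] at hAcard
    rwa [Set.ncard_eq_toFinset_card P hPfin]
  omega
end

section
/- Fix ε > 0 with 2dε < 1 and d ≥ 2. Suppose W_i ∈ ℝ^{n_i × n_{i−1}} satisfies ‖W_{i,+,x}ᵀ W_{i,+,x} − (1/2) I_{n_{i−1}}‖ ≤ ε for all nonzero x and all i = 1,…,d (a consequence of the WDC). Then for all nonzero x ∈ ℝ^{n_0}, ‖(∏_{i=d}^1 W_{i,+,x})ᵀ (∏_{i=d}^1 W_{i,+,x}) − 2^{−d} I_{n_0}‖ ≤ 4εd·2^{−d}. -/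
open Real Matrix

/-- `prodMat n W x j = W_{j,+,x} ⋯ W_{1,+,x}`, the product of the activated weight
matrices of the first `j` layers of the ReLU network on input `x`. -/
noncomputable def prodMat (n : ℕ → ℕ)
    (W : (i : ℕ) → Matrix (Fin (n (i + 1))) (Fin (n i)) ℝ)
    (x : Fin (n 0) → ℝ) : (j : ℕ) → Matrix (Fin (n j)) (Fin (n 0)) ℝ
  | 0 => 1
  | j + 1 => Wplus (W j) ((prodMat n W x j).mulVec x) * prodMat n W x j

section Aux

open scoped Matrix.Norms.L2Operator

lemma spec_eq_norm {n k : ℕ} (M : Matrix (Fin n) (Fin k) ℝ) : spec M = ‖M‖ := rfl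

lemma real_conjT {n k : ℕ} (M : Matrix (Fin n) (Fin k) ℝ) : Mᴴ = Mᵀ := by
  ext i j; simp [Matrix.conjTranspose_apply]

lemma norm_one_le' (n : ℕ) : ‖(1 : Matrix (Fin n) (Fin n) ℝ)‖ ≤ 1 := by
  have h := Matrix.l2_opNorm_conjTranspose_mul_self (1 : Matrix (Fin n) (Fin n) ℝ)
  rw [conjTranspose_one, mul_one] at h
  nlinarith [norm_nonneg (1 : Matrix (Fin n) (Fin n) ℝ)]

lemma norm_transpose_mul_self {a b : ℕ} (M : Matrix (Fin a) (Fin b) ℝ) :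
    ‖Mᵀ * M‖ = ‖M‖ * ‖M‖ := by
  rw [← real_conjT]; exact Matrix.l2_opNorm_conjTranspose_mul_self M

lemma norm_transpose_eq {a b : ℕ} (M : Matrix (Fin a) (Fin b) ℝ) : ‖Mᵀ‖ = ‖M‖ := by
  rw [← real_conjT]; exact Matrix.l2_opNorm_conjTranspose M

lemma key_identity {a b c : ℕ} (B : Matrix (Fin a) (Fin b) ℝ) (P : Matrix (Fin b) (Fin c) ℝ)
    (r : ℝ) :
    (B * P)ᵀ * (B * P) - ((1:ℝ)/2 * r) • 1
      = Pᵀ * (Bᵀ * B - (1/2 : ℝ) • (1 : Matrix (Fin b) (Fin b) ℝ)) * P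
        + (1/2 : ℝ) • (Pᵀ * P - r • (1 : Matrix (Fin c) (Fin c) ℝ)) := by
  simp only [transpose_mul, Matrix.mul_sub, Matrix.sub_mul, Matrix.smul_mul, Matrix.mul_smul,
    Matrix.one_mul, mul_one, smul_sub, smul_smul, Matrix.mul_assoc]
  abel

lemma arith_bound (t : ℝ) (ht0 : 0 ≤ t) : ∀ j : ℕ, t * j ≤ 1 →
    (1 + t) ^ j ≤ 1 + t * j + (t * j) ^ 2 := by
  intro j
  induction j with
  | zero => simp
  | succ j ih =>
    intro hj1
    have h1 : (0:ℝ) ≤ (j:ℝ) := Nat.cast_nonneg j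
    have hj0 : t * j ≤ 1 := by push_cast at hj1 ⊢; nlinarith
    have ih' := ih hj0
    have h2 : (1+t) * (1+t)^j ≤ (1+t) * (1 + t*j + (t*j)^2) :=
      mul_le_mul_of_nonneg_left ih' (by linarith)
    have hk : (1+t)^(j+1) = (1+t) * (1+t)^j := by ring
    push_cast at hj1 ⊢
    nlinarith [mul_nonneg ht0 h1, sq_nonneg (t*(j:ℝ))]

end Aux

open scoped Matrix.Norms.L2Operator

theorem multilayer_product_isometry (d : ℕ) (hd : 2 ≤ d) (ε : ℝ)
    (hε0 : 0 < ε) (hε : 2 * d * ε < 1)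
    (n : ℕ → ℕ) (W : (i : ℕ) → Matrix (Fin (n (i + 1))) (Fin (n i)) ℝ)
    (hWDC : ∀ i < d, ∀ x : Fin (n 0) → ℝ, x ≠ 0 →
      spec ((Wplus (W i) ((prodMat n W x i).mulVec x))ᵀ
            * Wplus (W i) ((prodMat n W x i).mulVec x)
          - (1 / 2 : ℝ) • (1 : Matrix (Fin (n i)) (Fin (n i)) ℝ)) ≤ ε)
    (x : Fin (n 0) → ℝ) (hx : x ≠ 0) :
    spec ((prodMat n W x d)ᵀ * prodMat n W x d
        - ((2 : ℝ) ^ d)⁻¹ • (1 : Matrix (Fin (n 0)) (Fin (n 0)) ℝ))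
      ≤ 4 * ε * d / 2 ^ d := by
  simp only [spec_eq_norm] at hWDC ⊢
  -- main induction
  have key : ∀ j : ℕ, j ≤ d →
      ‖(prodMat n W x j)ᵀ * prodMat n W x j
          - ((2 : ℝ) ^ j)⁻¹ • (1 : Matrix (Fin (n 0)) (Fin (n 0)) ℝ)‖
        ≤ ((2 : ℝ) ^ j)⁻¹ * ((1 + 2 * ε) ^ j - 1) := by
    intro j
    induction j with
    | zero =>
      intro _
      simp [prodMat, Matrix.transpose_one]
    | succ j ih =>
      intro hj
      have hjd : j ≤ d := Nat.le_of_succ_le hj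
      have ihj := ih hjd
      set P := prodMat n W x j with hP
      set B := Wplus (W j) (P.mulVec x) with hB
      have hE : ‖Bᵀ * B - (1/2 : ℝ) • (1 : Matrix (Fin (n j)) (Fin (n j)) ℝ)‖ ≤ ε :=
        hWDC j (Nat.lt_of_succ_le hj) x hx
      -- bound on ‖P‖²
      have hPP : ‖Pᵀ * P‖ ≤ ((2 : ℝ) ^ j)⁻¹ * (1 + 2 * ε) ^ j := by
        have h1 : ‖Pᵀ * P‖ ≤ ‖Pᵀ * P - ((2 : ℝ) ^ j)⁻¹ • (1 : Matrix (Fin (n 0)) (Fin (n 0)) ℝ)‖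
              + ‖((2 : ℝ) ^ j)⁻¹ • (1 : Matrix (Fin (n 0)) (Fin (n 0)) ℝ)‖ := by
          have h0 := norm_add_le
            (Pᵀ * P - ((2 : ℝ) ^ j)⁻¹ • (1 : Matrix (Fin (n 0)) (Fin (n 0)) ℝ))
            (((2 : ℝ) ^ j)⁻¹ • (1 : Matrix (Fin (n 0)) (Fin (n 0)) ℝ))
          rwa [sub_add_cancel] at h0
        calc ‖Pᵀ * P‖ ≤ ‖Pᵀ * P - ((2 : ℝ) ^ j)⁻¹ • (1 : Matrix (Fin (n 0)) (Fin (n 0)) ℝ)‖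
              + ‖((2 : ℝ) ^ j)⁻¹ • (1 : Matrix (Fin (n 0)) (Fin (n 0)) ℝ)‖ := h1
          _ ≤ ((2 : ℝ) ^ j)⁻¹ * ((1 + 2 * ε) ^ j - 1) + ((2 : ℝ) ^ j)⁻¹ * 1 := by
              gcongr
              · rw [norm_smul]
                have := norm_one_le' (n 0)
                have h2 : ‖((2:ℝ)^j)⁻¹‖ = ((2:ℝ)^j)⁻¹ := by
                  rw [Real.norm_eq_abs, abs_of_pos]; positivity
                rw [h2]
                have hp : (0:ℝ) < ((2:ℝ)^j)⁻¹ := by positivity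
                nlinarith
          _ = ((2 : ℝ) ^ j)⁻¹ * (1 + 2 * ε) ^ j := by ring
      have hPn : ‖P‖ * ‖P‖ ≤ ((2 : ℝ) ^ j)⁻¹ * (1 + 2 * ε) ^ j := by
        rw [← norm_transpose_mul_self]; exact hPP
      -- the decomposition
      have hdec : (prodMat n W x (j+1))ᵀ * prodMat n W x (j+1)
            - ((2 : ℝ) ^ (j+1))⁻¹ • (1 : Matrix (Fin (n 0)) (Fin (n 0)) ℝ)
          = Pᵀ * (Bᵀ * B - (1/2 : ℝ) • (1 : Matrix (Fin (n j)) (Fin (n j)) ℝ)) * P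
            + (1/2 : ℝ) • (Pᵀ * P - ((2 : ℝ) ^ j)⁻¹ • (1 : Matrix (Fin (n 0)) (Fin (n 0)) ℝ)) := by
        have h2 : ((2 : ℝ) ^ (j+1))⁻¹ = (1:ℝ)/2 * ((2:ℝ)^j)⁻¹ := by
          rw [pow_succ]; field_simp
        rw [h2]
        exact key_identity B P (((2:ℝ)^j)⁻¹)
      rw [hdec]
      have hnorm1 : ‖Pᵀ * (Bᵀ * B - (1/2 : ℝ) • (1 : Matrix (Fin (n j)) (Fin (n j)) ℝ)) * P‖
          ≤ ((2 : ℝ) ^ j)⁻¹ * (1 + 2 * ε) ^ j * ε := by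
        calc ‖Pᵀ * (Bᵀ * B - (1/2 : ℝ) • (1 : Matrix (Fin (n j)) (Fin (n j)) ℝ)) * P‖
            ≤ ‖Pᵀ * (Bᵀ * B - (1/2 : ℝ) • (1 : Matrix (Fin (n j)) (Fin (n j)) ℝ))‖ * ‖P‖ :=
              Matrix.l2_opNorm_mul _ _
          _ ≤ (‖Pᵀ‖ * ‖Bᵀ * B - (1/2 : ℝ) • (1 : Matrix (Fin (n j)) (Fin (n j)) ℝ)‖) * ‖P‖ := by
              gcongr; exact Matrix.l2_opNorm_mul _ _
          _ ≤ (‖Pᵀ‖ * ε) * ‖P‖ := by gcongr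
          _ = (‖P‖ * ‖P‖) * ε := by rw [norm_transpose_eq]; ring
          _ ≤ (((2 : ℝ) ^ j)⁻¹ * (1 + 2 * ε) ^ j) * ε := by gcongr
          _ = ((2 : ℝ) ^ j)⁻¹ * (1 + 2 * ε) ^ j * ε := by ring
      calc ‖Pᵀ * (Bᵀ * B - (1/2 : ℝ) • (1 : Matrix (Fin (n j)) (Fin (n j)) ℝ)) * P
              + (1/2 : ℝ) • (Pᵀ * P - ((2:ℝ)^j)⁻¹ • (1 : Matrix (Fin (n 0)) (Fin (n 0)) ℝ))‖
          ≤ ‖Pᵀ * (Bᵀ * B - (1/2 : ℝ) • (1 : Matrix (Fin (n j)) (Fin (n j)) ℝ)) * P‖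
            + ‖(1/2 : ℝ) • (Pᵀ * P - ((2:ℝ)^j)⁻¹ • (1 : Matrix (Fin (n 0)) (Fin (n 0)) ℝ))‖ :=
            norm_add_le _ _
        _ ≤ ((2 : ℝ) ^ j)⁻¹ * (1 + 2 * ε) ^ j * ε
            + (1/2) * (((2 : ℝ) ^ j)⁻¹ * ((1 + 2 * ε) ^ j - 1)) := by
            gcongr
            rw [norm_smul, Real.norm_eq_abs]
            have : |(1:ℝ)/2| = 1/2 := by norm_num
            rw [this]
            gcongr
        _ ≤ ((2 : ℝ) ^ (j+1))⁻¹ * ((1 + 2 * ε) ^ (j+1) - 1) := by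
            have h2 : ((2 : ℝ) ^ (j+1))⁻¹ = (1:ℝ)/2 * ((2:ℝ)^j)⁻¹ := by
              rw [pow_succ]; field_simp
            apply le_of_eq
            rw [h2, pow_succ]; ring
  -- conclude
  have hkd := key d le_rfl
  have hfin : ((2 : ℝ) ^ d)⁻¹ * ((1 + 2 * ε) ^ d - 1) ≤ 4 * ε * d / 2 ^ d := by
    have ht : 2 * ε * d ≤ 1 := by nlinarith
    have harith := arith_bound (2 * ε) (by linarith) d ht
    have hp : (0:ℝ) < ((2:ℝ)^d)⁻¹ := by positivity
    have hd0 : (0:ℝ) ≤ (d:ℝ) := Nat.cast_nonneg d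
    have hs0 : (0:ℝ) ≤ 2 * ε * d := by positivity
    have hsq : (2 * ε * d) ^ 2 ≤ 2 * ε * d := by
      nlinarith [mul_le_mul_of_nonneg_left ht hs0]
    rw [div_eq_mul_inv]
    have : (1 + 2 * ε) ^ d - 1 ≤ 4 * ε * d := by nlinarith
    nlinarith
  linarith
end
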